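/- arXiv:2510.10678 — 10 statements merged into one kernel-verified Lean document; each statement's English description precedes it below -/
import Mathlib

section
/- Assume p₂,…,p_r are odd. Then the integer -((r-1)(r-2)/2)·P + (r-2)·Σ_{i=1}^r P/p_i - Σ_{1 ≤ i < j ≤ r} P/(p_i p_j) is odd. -/
lemma odd_of_cast2 (n : ℤ) (h : (n : ZMod 2) = 1) : Odd n := by
  rw [← Int.not_even_iff_odd]
  intro hd
  obtain ⟨k, hk⟩ := hd
  rw [hk] at h
  push_cast at h
  rw [show ((k : ZMod 2) + k) = 2 * k from by ring, show (2 : ZMod 2) = 0 from rfl] at h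
  simp at h

lemma cast2_of_odd (n : ℤ) (h : Odd n) : (n : ZMod 2) = 1 := by
  obtain ⟨k, hk⟩ := h
  subst hk
  push_cast
  have : (2 : ZMod 2) = 0 := rfl
  rw [this]; ring

/-- Assume `p₂,…,p_r` are odd (here indexed by `j ≠ 0`). Then the integer
`-((r-1)(r-2)/2)·P + (r-2)·Σ_i P/p_i - Σ_{i<j} P/(p_i p_j)` is odd. -/
theorem stmt_2 (r : ℕ) (hr : 3 ≤ r) (p : Fin r → ℤ)
    (hp : ∀ j, 0 < p j)
    (hcop : ∀ i j : Fin r, i ≠ j → IsCoprime (p i) (p j))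
    (hodd : ∀ j : Fin r, (j : ℕ) ≠ 0 → Odd (p j))
    (P : ℤ) (hP : P = ∏ j, p j)
    (phat : Fin r → ℤ) (hphat : ∀ j, p j * phat j = P)
    (phat2 : Fin r → Fin r → ℤ)
    (hphat2 : ∀ i j : Fin r, i ≠ j → p i * p j * phat2 i j = P) :
    Odd (-((((r : ℤ) - 1) * ((r : ℤ) - 2)) / 2) * P
      + ((r : ℤ) - 2) * ∑ i, phat i
      - ∑ i, ∑ j ∈ Finset.univ.filter (fun j => i < j), phat2 i j) := by
  haveI : NeZero r := ⟨by omega⟩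
  have h2 : (2 : ZMod 2) = 0 := rfl
  apply odd_of_cast2
  have hodd2 : ∀ j : Fin r, (j : ℕ) ≠ 0 → (p j : ZMod 2) = 1 :=
    fun j hj => cast2_of_odd _ (hodd j hj)
  have hP2 : ∀ j, (p j : ZMod 2) * (phat j : ZMod 2) = (P : ZMod 2) := by
    intro j; exact_mod_cast congrArg (Int.cast : ℤ → ZMod 2) (hphat j)
  have hPP2 : ∀ i j : Fin r, i ≠ j →
      (p i : ZMod 2) * (p j : ZMod 2) * (phat2 i j : ZMod 2) = (P : ZMod 2) := by
    intro i j hij; exact_mod_cast congrArg (Int.cast : ℤ → ZMod 2) (hphat2 i j hij)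
  have hcardIoi : ∀ i : Fin r, (Finset.univ.filter (fun j => i < j)).card = r - 1 - i := by
    intro i
    rw [show Finset.univ.filter (fun j => i < j) = Finset.Ioi i from by ext; simp]
    exact Fin.card_Ioi i
  push_cast
  rcases Int.even_or_odd (p 0) with he | ho
  · -- p 0 even
    have hp0 : ((p 0 : ℤ) : ZMod 2) = 0 := by
      obtain ⟨k, hk⟩ := he; rw [hk]; push_cast; rw [show ((k:ZMod 2) + k) = 2 * k from by ring, h2]; ring
    have hPc : ((P : ℤ) : ZMod 2) = 0 := by
      rw [hP]; push_cast
      exact Finset.prod_eq_zero (Finset.mem_univ 0) hp0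
    -- phat 0 is odd
    have hphat0 : ((phat 0 : ℤ) : ZMod 2) = 1 := by
      have key : phat 0 = ∏ j ∈ Finset.univ.erase 0, p j := by
        have h1 : p 0 * phat 0 = p 0 * ∏ j ∈ Finset.univ.erase 0, p j := by
          rw [hphat 0, hP, Finset.mul_prod_erase _ _ (Finset.mem_univ 0)]
        exact mul_left_cancel₀ (hp 0).ne' h1
      rw [key]; push_cast
      apply Finset.prod_eq_one
      intro j hj
      exact hodd2 j (fun h => (Finset.mem_erase.mp hj).1 (Fin.ext h))
    have hphatj : ∀ j : Fin r, (j : ℕ) ≠ 0 → ((phat j : ℤ) : ZMod 2) = 0 := by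
      intro j hj
      have := hP2 j
      rw [hodd2 j hj, one_mul, hPc] at this
      exact this
    have hsum1 : ∑ j, ((phat j : ℤ) : ZMod 2) = 1 := by
      rw [Finset.sum_eq_single 0]
      · exact hphat0
      · intro j _ hj; exact hphatj j (fun h => hj (Fin.ext h))
      · intro h; exact absurd (Finset.mem_univ _) h
    -- phat2 values
    have hphat2_0 : ∀ j : Fin r, (0 : Fin r) < j → ((phat2 0 j : ℤ) : ZMod 2) = 1 := by
      intro j hj
      have hne : (0 : Fin r) ≠ j := hj.ne
      have key : p j * phat2 0 j = phat 0 := by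
        apply mul_left_cancel₀ (hp 0).ne'
        rw [← mul_assoc, hphat2 0 j hne, hphat 0]
      have := congrArg (Int.cast : ℤ → ZMod 2) key
      push_cast at this
      rwa [hodd2 j (fun h => hj.ne' (Fin.ext h)), one_mul, hphat0] at this
    have hphat2_pos : ∀ i j : Fin r, (i : ℕ) ≠ 0 → i < j → ((phat2 i j : ℤ) : ZMod 2) = 0 := by
      intro i j hi hij
      have hjne : (j : ℕ) ≠ 0 := by
        intro h
        have : j = 0 := Fin.ext h
        subst this
        exact absurd hij (by simp [Fin.lt_def])
      have := hPP2 i j hij.ne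
      rwa [hodd2 i hi, hodd2 j hjne, one_mul, one_mul, hPc] at this
    have hsum2 : ∑ i, ∑ j ∈ Finset.univ.filter (fun j => i < j), ((phat2 i j : ℤ) : ZMod 2)
        = ((r - 1 : ℕ) : ZMod 2) := by
      rw [Finset.sum_eq_single 0]
      · rw [Finset.sum_congr rfl (fun j hj => hphat2_0 j (Finset.mem_filter.mp hj).2)]
        rw [Finset.sum_const, hcardIoi 0, nsmul_eq_mul, mul_one]
        norm_num
      · intro i _ hi
        apply Finset.sum_eq_zero
        intro j hj
        exact hphat2_pos i j (fun h => hi (Fin.ext h)) (Finset.mem_filter.mp hj).2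
      · intro h; exact absurd (Finset.mem_univ _) h
    rw [hPc, hsum1, hsum2]
    have : ((r - 1 : ℕ) : ZMod 2) = (r : ZMod 2) - 1 := by
      have : ((r - 1 : ℕ) : ℤ) = (r : ℤ) - 1 := by omega
      have := congrArg (Int.cast : ℤ → ZMod 2) this
      push_cast at this
      exact_mod_cast this
    rw [this]
    linear_combination (-1 : ZMod 2) * h2
  · -- p 0 odd: all p j odd
    have hall : ∀ j : Fin r, ((p j : ℤ) : ZMod 2) = 1 := by
      intro j
      by_cases hj : (j : ℕ) = 0
      · have : j = 0 := Fin.ext hj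
        subst this; exact cast2_of_odd _ ho
      · exact hodd2 j hj
    have hPc : ((P : ℤ) : ZMod 2) = 1 := by
      rw [hP]; push_cast; exact Finset.prod_eq_one fun j _ => hall j
    have hphatc : ∀ j, ((phat j : ℤ) : ZMod 2) = 1 := by
      intro j; have := hP2 j; rwa [hall j, one_mul, hPc] at this
    have hphat2c : ∀ i j : Fin r, i ≠ j → ((phat2 i j : ℤ) : ZMod 2) = 1 := by
      intro i j hij
      have := hPP2 i j hij
      rwa [hall i, hall j, one_mul, one_mul, hPc] at this
    have hsum1 : ∑ j, ((phat j : ℤ) : ZMod 2) = (r : ZMod 2) := by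
      rw [Finset.sum_congr rfl fun j _ => hphatc j, Finset.sum_const]
      simp
    set N : ℕ := ∑ i : Fin r, (r - 1 - (i : ℕ)) with hN
    have hsum2 : ∑ i, ∑ j ∈ Finset.univ.filter (fun j => i < j), ((phat2 i j : ℤ) : ZMod 2)
        = (N : ZMod 2) := by
      have : ∀ i : Fin r, ∑ j ∈ Finset.univ.filter (fun j => i < j), ((phat2 i j : ℤ) : ZMod 2)
          = ((r - 1 - (i : ℕ) : ℕ) : ZMod 2) := by
        intro i
        rw [Finset.sum_congr rfl (fun j hj => hphat2c i j (Finset.mem_filter.mp hj).2.ne)]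
        rw [Finset.sum_const, hcardIoi i, nsmul_eq_mul, mul_one]
      rw [Finset.sum_congr rfl fun i _ => this i]
      rw [hN, Nat.cast_sum]
    have hNval : 2 * (N : ℤ) = (r : ℤ) * ((r : ℤ) - 1) := by
      have h1 : N = ∑ i ∈ Finset.range r, (r - 1 - i) := Fin.sum_univ_eq_sum_range _ r
      have h2' : ∑ i ∈ Finset.range r, (r - 1 - i) = ∑ i ∈ Finset.range r, i :=
        Finset.sum_range_reflect id r
      have h3 : (∑ i ∈ Finset.range r, i) * 2 = r * (r - 1) := Finset.sum_range_id_mul_two r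
      have : N * 2 = r * (r - 1) := by rw [h1, h2']; exact h3
      have := congrArg (Nat.cast : ℕ → ℤ) this
      push_cast at this
      rw [Nat.cast_sub (by omega)] at this
      push_cast at this
      linarith
    -- the division term
    obtain ⟨k, hk⟩ := Int.even_mul_succ_self ((r : ℤ) - 2)
    have hk' : ((r : ℤ) - 1) * ((r : ℤ) - 2) = 2 * k := by linarith [hk]
    have hd : (((r : ℤ) - 1) * ((r : ℤ) - 2)) / 2 = k := by
      rw [hk']; exact Int.mul_ediv_cancel_left k (by norm_num)
    rw [hd, hPc, hsum1, hsum2]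
    have hkN : (k : ZMod 2) + (N : ZMod 2) = ((r : ZMod 2) - 1) ^ 2 := by
      have hint : k + (N : ℤ) = ((r : ℤ) - 1) ^ 2 := by nlinarith [hk', hNval]
      have := congrArg (Int.cast : ℤ → ZMod 2) hint
      push_cast at this
      exact_mod_cast this
    linear_combination (-1 : ZMod 2) * hkN + (-1 : ZMod 2) * h2
end

section
/- Let r ≥ 3, p₁,…,p_r pairwise coprime positive integers, P = p₁⋯p_r. Define the set 𝔖 = rP + N*(E) + 2Pℤ ⊂ ℤ, where E = {±1}^r and N*(ε) = Σ_j ε_j P/p_j. Define χ : ℤ → ℤ by χ(m) = ((ℓ+1)⋯(ℓ+r-3)/(r-3)!)·ε₁⋯ε_r when m ∈ 𝔖, where ε = ε(m) ∈ E is the unique sign vector with m ≡ rP + N*(ε) mod 2P and ℓ = (m - (r-2)P - N*(ε))/(2P); and χ(m) = 0 otherwise. Then ℓ is always an integer, and χ is an odd function, i.e., χ(-m) = -χ(m) for all m ∈ ℤ. -/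
lemma aux_prod_stmt7 (n : ℕ) (x : ℚ) :
    ∏ i ∈ Finset.range n, (-(n : ℚ) - x + i) =
    (-1) ^ n * ∏ i ∈ Finset.range n, (x + i + 1) := by
  induction n with
  | zero => simp
  | succ n ih =>
    push_cast
    rw [Finset.prod_range_succ' (fun i => (-((n : ℚ) + 1) - x + i)) n,
        Finset.prod_range_succ]
    have h : (∏ i ∈ Finset.range n, (-((n : ℚ) + 1) - x + ((i : ℚ) + 1))) =
        ∏ i ∈ Finset.range n, (-(n : ℚ) - x + i) := by
      refine Finset.prod_congr rfl fun i _ => ?_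
      ring
    push_cast
    rw [h, ih]
    push_cast; ring

/-- Let `𝔖 = rP + N*(E) + 2Pℤ` and let `χ : ℤ → ℚ` equal
`((ℓ+1)⋯(ℓ+r-3)/(r-3)!)·ε₁⋯ε_r` on `𝔖` (with `ε = ε(m)` the sign vector such
that `m ≡ rP + N*(ε) mod 2P` and `ℓ = (m - (r-2)P - N*(ε))/(2P)`), and `0` off
`𝔖`. Then `ℓ` is always an integer (the displayed divisibility), and `χ` is odd. -/
theorem stmt_7 (r : ℕ) (hr : 3 ≤ r) (p : Fin r → ℤ)
    (hp : ∀ j, 0 < p j)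
    (hcop : ∀ i j : Fin r, i ≠ j → IsCoprime (p i) (p j))
    (P : ℤ) (hP : P = ∏ j, p j)
    (phat : Fin r → ℤ) (hphat : ∀ j, p j * phat j = P)
    (χ : ℤ → ℚ)
    (hval : ∀ (m : ℤ) (ε : Fin r → ℤ), (∀ j, ε j = 1 ∨ ε j = -1) →
      2 * P ∣ m - ((r : ℤ) * P + ∑ j, ε j * phat j) →
      χ m = ((∏ i ∈ Finset.range (r - 3),
            ((((m - (((r : ℤ) - 2) * P + ∑ j, ε j * phat j)) / (2 * P) : ℤ) : ℚ)
              + (i : ℚ) + 1)) / (Nat.factorial (r - 3) : ℚ))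
          * ∏ j, (ε j : ℚ))
    (hzero : ∀ m : ℤ,
      (¬ ∃ ε : Fin r → ℤ, (∀ j, ε j = 1 ∨ ε j = -1) ∧
        2 * P ∣ m - ((r : ℤ) * P + ∑ j, ε j * phat j)) → χ m = 0) :
    (∀ (m : ℤ) (ε : Fin r → ℤ), (∀ j, ε j = 1 ∨ ε j = -1) →
      2 * P ∣ m - ((r : ℤ) * P + ∑ j, ε j * phat j) →
      2 * P ∣ m - (((r : ℤ) - 2) * P + ∑ j, ε j * phat j)) ∧
    (∀ m : ℤ, χ (-m) = -χ m) := by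
  have hPpos : 0 < P := by
    rw [hP]; exact Finset.prod_pos fun j _ => hp j
  have hPne : (2 * P : ℤ) ≠ 0 := by positivity
  have part1 : ∀ (m : ℤ) (ε : Fin r → ℤ),
      2 * P ∣ m - ((r : ℤ) * P + ∑ j, ε j * phat j) →
      2 * P ∣ m - (((r : ℤ) - 2) * P + ∑ j, ε j * phat j) := by
    intro m ε h1
    have h : m - (((r : ℤ) - 2) * P + ∑ j, ε j * phat j)
        = (m - ((r : ℤ) * P + ∑ j, ε j * phat j)) + 2 * P := by ring
    rw [h]; exact dvd_add h1 (dvd_refl _)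
  refine ⟨fun m ε _ h1 => part1 m ε h1, fun m => ?_⟩
  by_cases h : ∃ ε : Fin r → ℤ, (∀ j, ε j = 1 ∨ ε j = -1) ∧
      2 * P ∣ m - ((r : ℤ) * P + ∑ j, ε j * phat j)
  · obtain ⟨ε, hε, h1⟩ := h
    have hε' : ∀ j, (-ε j : ℤ) = 1 ∨ (-ε j : ℤ) = -1 := by
      intro j; rcases hε j with h' | h' <;> simp [h']
    have hSneg : (∑ j, (-ε j) * phat j) = -(∑ j, ε j * phat j) := by
      rw [← Finset.sum_neg_distrib]
      exact Finset.sum_congr rfl fun j _ => by ring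
    have h1' : 2 * P ∣ -m - ((r : ℤ) * P + ∑ j, (-ε j) * phat j) := by
      rw [hSneg]
      obtain ⟨k, hk⟩ := h1
      exact ⟨-k - r, by linarith⟩
    have hdA : 2 * P ∣ m - (((r : ℤ) - 2) * P + ∑ j, ε j * phat j) := part1 m ε h1
    have hdB : 2 * P ∣ -m - (((r : ℤ) - 2) * P + ∑ j, (-ε j) * phat j) :=
      part1 (-m) _ h1'
    have hA : ((m - (((r : ℤ) - 2) * P + ∑ j, ε j * phat j)) / (2 * P)) * (2 * P)
        = m - (((r : ℤ) - 2) * P + ∑ j, ε j * phat j) := Int.ediv_mul_cancel hdA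
    have hB : ((-m - (((r : ℤ) - 2) * P + ∑ j, (-ε j) * phat j)) / (2 * P)) * (2 * P)
        = -m - (((r : ℤ) - 2) * P + ∑ j, (-ε j) * phat j) := Int.ediv_mul_cancel hdB
    have hBA : (-m - (((r : ℤ) - 2) * P + ∑ j, (-ε j) * phat j)) / (2 * P)
        = -((r : ℤ) - 2) - (m - (((r : ℤ) - 2) * P + ∑ j, ε j * phat j)) / (2 * P) := by
      refine mul_right_cancel₀ hPne ?_
      linear_combination hB + hA - hSneg
    set n : ℕ := r - 3 with hn
    have hrn : ((r : ℚ)) - 2 = (n : ℚ) + 1 := by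
      rw [hn, Nat.cast_sub hr]
      ring
    have hcast : (((-m - (((r : ℤ) - 2) * P + ∑ j, (-ε j) * phat j)) / (2 * P) : ℤ) : ℚ)
        = -((n : ℚ) + 1)
          - (((m - (((r : ℤ) - 2) * P + ∑ j, ε j * phat j)) / (2 * P) : ℤ) : ℚ) := by
      rw [hBA]
      push_cast
      linear_combination -hrn
    have hprod1 : (∏ i ∈ Finset.range n,
          ((((-m - (((r : ℤ) - 2) * P + ∑ j, (-ε j) * phat j)) / (2 * P) : ℤ) : ℚ)
            + (i : ℚ) + 1))
        = (-1) ^ n * ∏ i ∈ Finset.range n,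
          ((((m - (((r : ℤ) - 2) * P + ∑ j, ε j * phat j)) / (2 * P) : ℤ) : ℚ)
            + (i : ℚ) + 1) := by
      rw [← aux_prod_stmt7 n]
      refine Finset.prod_congr rfl fun i _ => ?_
      rw [hcast]; ring
    have hprod2 : (∏ j, ((-ε j : ℤ) : ℚ)) = (-1) ^ r * ∏ j, ((ε j : ℤ) : ℚ) := by
      push_cast
      rw [show (∏ j, -((ε j : ℚ))) = ∏ j : Fin r, (-1) * (ε j : ℚ) from
        Finset.prod_congr rfl fun j _ => by ring]
      rw [Finset.prod_mul_distrib, Finset.prod_const]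
      simp
    have hsign : ((-1 : ℚ)) ^ n * (-1) ^ r = -1 := by
      rw [← pow_add]
      exact Odd.neg_one_pow ⟨r - 2, by omega⟩
    rw [hval m ε hε h1, hval (-m) (fun j => -ε j) hε' h1']
    rw [hprod1, hprod2]
    linear_combination ((∏ i ∈ Finset.range n,
        ((((m - (((r : ℤ) - 2) * P + ∑ j, ε j * phat j)) / (2 * P) : ℤ) : ℚ)
          + (i : ℚ) + 1)) * (∏ j, ((ε j : ℤ) : ℚ)) / (Nat.factorial n : ℚ)) * hsign
  · have h' : ¬ ∃ ε : Fin r → ℤ, (∀ j, ε j = 1 ∨ ε j = -1) ∧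
        2 * P ∣ -m - ((r : ℤ) * P + ∑ j, ε j * phat j) := by
      rintro ⟨ε, hε, hdvd⟩
      refine h ⟨fun j => -ε j, fun j => by rcases hε j with h' | h' <;> simp [h'], ?_⟩
      have hSneg : (∑ j, (-ε j) * phat j) = -(∑ j, ε j * phat j) := by
        rw [← Finset.sum_neg_distrib]
        exact Finset.sum_congr rfl fun j _ => by ring
      simp only [hSneg]
      obtain ⟨k, hk⟩ := hdvd
      exact ⟨-k - r, by linarith⟩
    rw [hzero m h, hzero (-m) h', neg_zero]
end

section
/- With notation as in the Hikami set definition, if ℓ, ℓ' ∈ 𝔏 are distinct elements of the set 𝔏(p₁,…,p_r) (i.e., 0 ≤ ℓ_j ≤ p_j, ℓ_j/p_j ∉ ℤ for at least three j, ℓ_j even for j ≥ 2), then the Hikami sets 𝔖^ℓ = N^ℓ(E) + 2Pℤ and 𝔖^{ℓ'} = N^{ℓ'}(E) + 2Pℤ are disjoint. -/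
private lemma sign_cases (m a b e e' : ℤ) (he : e = 1 ∨ e = -1) (he' : e' = 1 ∨ e' = -1)
    (h : m ∣ e' * b - e * a) : m ∣ a - b ∨ m ∣ a + b := by
  rcases he with rfl | rfl <;> rcases he' with rfl | rfl <;> obtain ⟨k, hk⟩ := h
  · exact Or.inl ⟨-k, by linear_combination -hk⟩
  · exact Or.inr ⟨-k, by linear_combination -hk⟩
  · exact Or.inr ⟨k, by linear_combination hk⟩
  · exact Or.inl ⟨k, by linear_combination hk⟩

private lemma close0 (q a b : ℤ) (hq : 0 < q) (ha : 0 ≤ a) (ha' : a ≤ q) (hb : 0 ≤ b)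
    (hb' : b ≤ q) (h : 2 * q ∣ a - b ∨ 2 * q ∣ a + b) : a = b := by
  rcases h with h | h
  · by_contra hne
    have h0 : a - b ≠ 0 := sub_ne_zero.mpr hne
    have h1 := Int.le_of_dvd (abs_pos.mpr h0) ((dvd_abs _ _).mpr h)
    have h2 : |a - b| ≤ q := abs_le.mpr ⟨by linarith, by linarith⟩
    linarith
  · rcases eq_or_lt_of_le (by linarith : (0:ℤ) ≤ a + b) with h0 | h0
    · omega
    · have h1 := Int.le_of_dvd h0 h
      omega

private lemma close1 (q a b : ℤ) (hq : 0 < q) (hqo : Odd q) (ha : 0 ≤ a) (ha' : a ≤ q)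
    (hb : 0 ≤ b) (hb' : b ≤ q) (h2a : 2 ∣ a) (h2b : 2 ∣ b)
    (h : q ∣ a - b ∨ q ∣ a + b) : a = b := by
  obtain ⟨m, hm⟩ := hqo
  rcases h with h | h
  · obtain ⟨k, hk⟩ := h
    have hk1 : k ≤ 1 := by
      have : q * k ≤ q * 1 := by rw [mul_one]; linarith
      exact le_of_mul_le_mul_left this hq
    have hk2 : -1 ≤ k := by
      have : q * (-1) ≤ q * k := by rw [mul_neg_one]; linarith
      exact le_of_mul_le_mul_left this hq
    interval_cases k <;> omega
  · obtain ⟨k, hk⟩ := h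
    have hk1 : k ≤ 2 := by
      have : q * k ≤ q * 2 := by linarith
      exact le_of_mul_le_mul_left this hq
    have hk2 : 0 ≤ k := by
      have : q * 0 ≤ q * k := by rw [mul_zero]; linarith
      exact le_of_mul_le_mul_left this hq
    interval_cases k <;> omega

/-- If `ℓ ≠ ℓ'` are distinct elements of `𝔏(p₁,…,p_r)` (that is, `0 ≤ ℓ_j ≤ p_j`,
`p_j ∤ ℓ_j` for at least three `j`, `ℓ_j` even for `j ≥ 2`), then the Hikami sets
`𝔖^ℓ = N^ℓ(E) + 2Pℤ` and `𝔖^{ℓ'} = N^{ℓ'}(E) + 2Pℤ` are disjoint. -/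
theorem stmt_9 (r : ℕ) (hr : 3 ≤ r) (p : Fin r → ℤ)
    (hp : ∀ j, 0 < p j)
    (hcop : ∀ i j : Fin r, i ≠ j → IsCoprime (p i) (p j))
    (hodd : ∀ j : Fin r, (j : ℕ) ≠ 0 → Odd (p j))
    (P : ℤ) (hP : P = ∏ j, p j)
    (phat : Fin r → ℤ) (hphat : ∀ j, p j * phat j = P)
    (ℓ ℓ' : Fin r → ℤ)
    (hℓ₁ : ∀ j, 0 ≤ ℓ j ∧ ℓ j ≤ p j)
    (hℓ₂ : 3 ≤ Set.ncard {j : Fin r | ¬ p j ∣ ℓ j})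
    (hℓ₃ : ∀ j : Fin r, (j : ℕ) ≠ 0 → 2 ∣ ℓ j)
    (hℓ'₁ : ∀ j, 0 ≤ ℓ' j ∧ ℓ' j ≤ p j)
    (hℓ'₂ : 3 ≤ Set.ncard {j : Fin r | ¬ p j ∣ ℓ' j})
    (hℓ'₃ : ∀ j : Fin r, (j : ℕ) ≠ 0 → 2 ∣ ℓ' j)
    (hne : ℓ ≠ ℓ')
    (ε ε' : Fin r → ℤ)
    (hε : ∀ j, ε j = 1 ∨ ε j = -1) (hε' : ∀ j, ε' j = 1 ∨ ε' j = -1) :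
    ¬ ((P + ∑ j, ε j * ℓ j * phat j)
        ≡ (P + ∑ j, ε' j * ℓ' j * phat j) [ZMOD 2 * P]) := by
  intro h
  apply hne
  set c : Fin r → ℤ := fun i => ε' i * ℓ' i - ε i * ℓ i with hc
  have hsum : (2 * P) ∣ ∑ i, c i * phat i := by
    have hd := Int.ModEq.dvd h
    have heq : (P + ∑ j, ε' j * ℓ' j * phat j) - (P + ∑ j, ε j * ℓ j * phat j)
        = ∑ i, c i * phat i := by
      simp only [hc, sub_mul, Finset.sum_sub_distrib]
      ring
    rwa [heq] at hd
  have hphat_eq : ∀ j, phat j = ∏ i ∈ Finset.univ.erase j, p i := by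
    intro j
    refine mul_left_cancel₀ (hp j).ne' ?_
    rw [hphat j, hP, Finset.mul_prod_erase _ _ (Finset.mem_univ j)]
  have hdvdP : ∀ j, p j ∣ P := fun j => ⟨phat j, (hphat j).symm⟩
  have hdvd_phat : ∀ i j : Fin r, i ≠ j → p j ∣ phat i := by
    intro i j hij
    have hPd : p j ∣ p i * phat i := by rw [hphat i]; exact hdvdP j
    exact (hcop j i hij.symm).dvd_of_dvd_mul_left hPd
  have hcop_phat : ∀ j, IsCoprime (p j) (phat j) := by
    intro j
    rw [hphat_eq j]
    exact IsCoprime.prod_right fun i hi => hcop j i (Finset.ne_of_mem_erase hi).symm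
  have hkey : ∀ j, p j ∣ c j := by
    intro j
    have h1 : p j ∣ ∑ i, c i * phat i := ((hdvdP j).mul_left 2).trans hsum
    have h2 : p j ∣ ∑ i ∈ Finset.univ.erase j, c i * phat i :=
      Finset.dvd_sum fun i hi => ((hdvd_phat i j (Finset.ne_of_mem_erase hi)).mul_left (c i))
    have hsplit : c j * phat j + ∑ i ∈ Finset.univ.erase j, c i * phat i
        = ∑ i, c i * phat i :=
      Finset.add_sum_erase Finset.univ (fun i => c i * phat i) (Finset.mem_univ j)
    have h3 : p j ∣ c j * phat j := by
      have heq : c j * phat j = (∑ i, c i * phat i)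
          - ∑ i ∈ Finset.univ.erase j, c i * phat i := by linarith
      rw [heq]; exact dvd_sub h1 h2
    exact (hcop_phat j).dvd_of_dvd_mul_right h3
  have hr0 : 0 < r := by omega
  set j0 : Fin r := ⟨0, hr0⟩ with hj0
  have hkey0 : 2 * p j0 ∣ c j0 := by
    have h1 : 2 * p j0 ∣ ∑ i, c i * phat i := (mul_dvd_mul_left 2 (hdvdP j0)).trans hsum
    have h2 : 2 * p j0 ∣ ∑ i ∈ Finset.univ.erase j0, c i * phat i := by
      refine Finset.dvd_sum fun i hi => ?_
      have hne0 : (i : ℕ) ≠ 0 := fun h0 => (Finset.ne_of_mem_erase hi) (Fin.ext h0)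
      have h2c : 2 ∣ c i := by
        simp only [hc]
        exact dvd_sub ((hℓ'₃ i hne0).mul_left (ε' i)) ((hℓ₃ i hne0).mul_left (ε i))
      exact mul_dvd_mul h2c (hdvd_phat i j0 (Finset.ne_of_mem_erase hi))
    have hsplit : c j0 * phat j0 + ∑ i ∈ Finset.univ.erase j0, c i * phat i
        = ∑ i, c i * phat i :=
      Finset.add_sum_erase Finset.univ (fun i => c i * phat i) (Finset.mem_univ j0)
    have h3 : 2 * p j0 ∣ c j0 * phat j0 := by
      have heq : c j0 * phat j0 = (∑ i, c i * phat i)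
          - ∑ i ∈ Finset.univ.erase j0, c i * phat i := by linarith
      rw [heq]; exact dvd_sub h1 h2
    have hodd_phat : Odd (phat j0) := by
      rw [hphat_eq j0]
      refine Finset.prod_induction _ Odd (fun a b ha hb => ha.mul hb) odd_one ?_
      intro i hi
      exact hodd i fun h0 => (Finset.ne_of_mem_erase hi) (Fin.ext h0)
    have hcop2 : IsCoprime (2 * p j0) (phat j0) := by
      refine IsCoprime.mul_left ?_ (hcop_phat j0)
      obtain ⟨m, hm⟩ := hodd_phat
      exact ⟨-m, 1, by linarith⟩
    exact hcop2.dvd_of_dvd_mul_right h3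
  funext j
  by_cases hj : (j : ℕ) = 0
  · have hjj : j = j0 := Fin.ext hj
    have hk0 : 2 * p j ∣ c j := by rw [hjj]; exact hkey0
    exact close0 (p j) (ℓ j) (ℓ' j) (hp j) (hℓ₁ j).1 (hℓ₁ j).2 (hℓ'₁ j).1 (hℓ'₁ j).2
      (sign_cases (2 * p j) _ _ _ _ (hε j) (hε' j) hk0)
  · exact close1 (p j) (ℓ j) (ℓ' j) (hp j) (hodd j hj) (hℓ₁ j).1 (hℓ₁ j).2 (hℓ'₁ j).1
      (hℓ'₁ j).2 (hℓ₃ j hj) (hℓ'₃ j hj)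
      (sign_cases (p j) _ _ _ _ (hε j) (hε' j) (hkey j))
end

section
/- Let h ∈ 𝔥 with t_h = 0 (no coordinate h_j is a multiple of p_j), and let s ≥ 0 with s < r. Then the 2P-periodic function m^s f^h : ℤ → ℤ, defined to be -ε₁⋯ε_r·(Σ_j ε_j h_j p̂_j)^s at n ≡ P + Σ_j ε_j h_j p̂_j (mod 2P) and 0 off the Hikami set 𝔖^h, has zero mean value: Σ_{n=1}^{2P} m^s f^h(n) = 0. -/
open Finset

lemma key_sum (r s : ℕ) (hs : s < r) (c : Fin r → ℤ) :
    ∑ ε ∈ Fintype.piFinset (fun _ : Fin r => ({1, -1} : Finset ℤ)),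
      (∏ j, ε j) * (∑ j, ε j * c j) ^ s = 0 := by
  have hpow : ∀ ε : Fin r → ℤ, (∑ j, ε j * c j) ^ s
      = ∑ f : Fin s → Fin r, ∏ i, (ε (f i) * c (f i)) :=
    fun ε => Fintype.sum_pow (fun j => ε j * c j) s
  simp only [hpow, Finset.mul_sum]
  rw [Finset.sum_comm]
  apply Finset.sum_eq_zero
  intro f _
  have hnsurj : ¬ Function.Surjective f := by
    intro hf
    have := Fintype.card_le_of_surjective f hf
    simp only [Fintype.card_fin] at this
    omega
  simp only [Function.Surjective, not_forall] at hnsurj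
  obtain ⟨j₀, hj₀⟩ := hnsurj
  have hj₀' : ∀ i, f i ≠ j₀ := fun i hi => hj₀ ⟨i, hi⟩
  have hsplit : ∀ ε : Fin r → ℤ,
      (∏ j, ε j) * ∏ i, (ε (f i) * c (f i))
      = ∏ j, (ε j * ∏ i ∈ Finset.univ.filter (fun i => f i = j), (ε j * c j)) := by
    intro ε
    rw [← Finset.prod_fiberwise_of_maps_to (g := f) (fun i _ => Finset.mem_univ (f i))
        (fun i => ε (f i) * c (f i)), ← Finset.prod_mul_distrib]
    apply Finset.prod_congr rfl
    intro j _
    congr 1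
    apply Finset.prod_congr rfl
    intro i hi
    rw [Finset.mem_filter] at hi
    rw [hi.2]
  simp only [hsplit]
  rw [Finset.sum_prod_piFinset ({1,-1} : Finset ℤ)
    (fun j x => x * ∏ i ∈ Finset.univ.filter (fun i => f i = j), (x * c j))]
  apply Finset.prod_eq_zero (Finset.mem_univ j₀)
  have hempty : Finset.univ.filter (fun i => f i = j₀) = ∅ := by
    apply Finset.filter_eq_empty_iff.mpr
    intro i _
    exact hj₀' i
  rw [hempty]
  simp

/-- Let `h ∈ 𝔥` with `t_h = 0` (no `h_j` is a multiple of `p_j`) and `0 ≤ s < r`.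
The `2P`-periodic `s`-Hikami function `m^s f^h : ℤ → ℤ`, equal to
`-ε₁⋯ε_r·(Σ_j ε_j h_j p̂_j)^s` at `n ≡ P + Σ_j ε_j h_j p̂_j (mod 2P)` and `0`
off the Hikami set `𝔖^h`, has zero mean value. -/
theorem stmt_11 (r : ℕ) (hr : 3 ≤ r) (p : Fin r → ℤ)
    (hp : ∀ j, 0 < p j)
    (hcop : ∀ i j : Fin r, i ≠ j → IsCoprime (p i) (p j))
    (P : ℤ) (hP : P = ∏ j, p j)
    (phat : Fin r → ℤ) (hphat : ∀ j, p j * phat j = P)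
    (h : Fin r → ℤ)
    (hh₁ : ∀ j, 0 ≤ h j ∧ h j ≤ p j)
    (hh₂ : 3 ≤ Set.ncard {j : Fin r | ¬ p j ∣ h j})
    (ht : ∀ j, ¬ p j ∣ h j)
    (s : ℕ) (hs : s < r)
    (F : ℤ → ℤ)
    (hFval : ∀ (n : ℤ) (ε : Fin r → ℤ), (∀ j, ε j = 1 ∨ ε j = -1) →
      2 * P ∣ n - (P + ∑ j, ε j * h j * phat j) →
      F n = -(∏ j, ε j) * (∑ j, ε j * h j * phat j) ^ s)
    (hFzero : ∀ n : ℤ,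
      (¬ ∃ ε : Fin r → ℤ, (∀ j, ε j = 1 ∨ ε j = -1) ∧
        2 * P ∣ n - (P + ∑ j, ε j * h j * phat j)) → F n = 0) :
    ∑ n ∈ Finset.Icc (1 : ℤ) (2 * P), F n = 0 := by
  classical
  have hPpos : 0 < P := hP ▸ Finset.prod_pos (fun j _ => hp j)
  have h2P : (0:ℤ) < 2 * P := by linarith
  set E := Fintype.piFinset (fun _ : Fin r => ({1, -1} : Finset ℤ)) with hE
  set S : (Fin r → ℤ) → ℤ := fun ε => ∑ j, ε j * h j * phat j with hS
  set nm : (Fin r → ℤ) → ℤ := fun ε => (P + S ε - 1) % (2 * P) + 1 with hnm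
  have hmemE : ∀ ε ∈ E, ∀ j, ε j = 1 ∨ ε j = -1 := by
    intro ε hε j
    have := Fintype.mem_piFinset.mp hε j
    simpa using this
  have hmemE' : ∀ ε : Fin r → ℤ, (∀ j, ε j = 1 ∨ ε j = -1) → ε ∈ E := by
    intro ε hε
    rw [Fintype.mem_piFinset]
    intro j
    rcases hε j with h1 | h1 <;> simp [h1]
  have hnmIcc : ∀ ε, nm ε ∈ Finset.Icc (1:ℤ) (2*P) := by
    intro ε
    rw [Finset.mem_Icc]
    simp only [hnm]
    constructor
    · have := Int.emod_nonneg (P + S ε - 1) (by positivity : (2*P:ℤ) ≠ 0)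
      omega
    · have := Int.emod_lt_of_pos (P + S ε - 1) h2P
      omega
  have hnmdvd : ∀ ε, 2*P ∣ nm ε - (P + S ε) := by
    intro ε
    have hmd := Int.emod_add_mul_ediv (P + S ε - 1) (2*P)
    refine ⟨-((P + S ε - 1) / (2*P)), ?_⟩
    simp only [hnm]
    linear_combination hmd
  have huniq : ∀ a b : ℤ, a ∈ Finset.Icc (1:ℤ) (2*P) → b ∈ Finset.Icc (1:ℤ) (2*P) →
      2*P ∣ a - b → a = b := by
    intro a b ha hb hd
    rw [Finset.mem_Icc] at ha hb
    obtain ⟨k, hk⟩ := hd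
    have hk1 : 2*P*k < 2*P*1 := by linarith
    have hk2 : 2*P*(-1) < 2*P*k := by linarith
    have hk1' : k < 1 := lt_of_mul_lt_mul_left hk1 (by linarith)
    have hk2' : -1 < k := lt_of_mul_lt_mul_left hk2 (by linarith)
    have : k = 0 := by omega
    rw [this] at hk
    linarith
  -- injectivity on E
  have hinj : ∀ ε ∈ E, ∀ ε' ∈ E, nm ε = nm ε' → ε = ε' := by
    intro ε hε ε' hε' heq
    have hd : 2*P ∣ S ε - S ε' := by
      have d1 := hnmdvd ε
      have d2 := hnmdvd ε'
      have := dvd_sub d2 d1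
      rw [heq] at this
      convert this using 1
      · rfl
      ring
    by_contra hne
    have : ∃ k, ε k ≠ ε' k := by
      by_contra hc
      push_neg at hc
      exact hne (funext hc)
    obtain ⟨k0, hk0⟩ := this
    have hg : ∀ j, ∃ g : ℤ, ε j - ε' j = 2 * g ∧ (ε j ≠ ε' j → g = 1 ∨ g = -1) := by
      intro j
      rcases hmemE ε hε j with h1 | h1 <;> rcases hmemE ε' hε' j with h2 | h2
      · exact ⟨0, by rw [h1, h2]; ring, fun hne' => absurd (h1.trans h2.symm) hne'⟩
      · exact ⟨1, by rw [h1, h2]; ring, fun _ => Or.inl rfl⟩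
      · exact ⟨-1, by rw [h1, h2]; ring, fun _ => Or.inr rfl⟩
      · exact ⟨0, by rw [h1, h2]; ring, fun hne' => absurd (h1.trans h2.symm) hne'⟩
    choose g hg1 hg2 using hg
    have hsum : S ε - S ε' = 2 * ∑ j, g j * h j * phat j := by
      rw [hS]
      simp only
      rw [← Finset.sum_sub_distrib, Finset.mul_sum]
      apply Finset.sum_congr rfl
      intro j _
      have e := hg1 j
      linear_combination (h j * phat j) * e
    have hPdvd : P ∣ ∑ j, g j * h j * phat j := by
      obtain ⟨k, hk⟩ := hd
      refine ⟨k, ?_⟩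
      have : 2 * ∑ j, g j * h j * phat j = 2 * (P * k) := by rw [← hsum, hk]; ring
      linarith
    have hdvd_phat : ∀ j, j ≠ k0 → p k0 ∣ phat j := by
      intro j hj
      have h1 : p k0 ∣ p j * phat j := ⟨phat k0, by rw [hphat j, ← hphat k0]⟩
      exact (hcop k0 j (Ne.symm hj)).dvd_of_dvd_mul_left h1
    have hterm : p k0 ∣ g k0 * h k0 * phat k0 := by
      have hPk : p k0 ∣ ∑ j, g j * h j * phat j :=
        dvd_trans ⟨phat k0, (hphat k0).symm⟩ hPdvd
      have hrest : p k0 ∣ ∑ j ∈ Finset.univ.erase k0, g j * h j * phat j :=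
        Finset.dvd_sum (fun j hj =>
          Dvd.dvd.mul_left (hdvd_phat j (Finset.ne_of_mem_erase hj)) _)
      have hsplit := Finset.add_sum_erase Finset.univ
        (fun j => g j * h j * phat j) (Finset.mem_univ k0)
      have : g k0 * h k0 * phat k0
          = (∑ j, g j * h j * phat j) - ∑ j ∈ Finset.univ.erase k0, g j * h j * phat j := by
        rw [← hsplit]; ring
      rw [this]
      exact dvd_sub hPk hrest
    have hphat_eq : phat k0 = ∏ j ∈ Finset.univ.erase k0, p j := by
      have hpe := Finset.mul_prod_erase Finset.univ p (Finset.mem_univ k0)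
      have h2 : p k0 * phat k0 = p k0 * ∏ j ∈ Finset.univ.erase k0, p j := by
        rw [hphat, hP, ← hpe]
      exact mul_left_cancel₀ (hp k0).ne' h2
    have hcop0 : IsCoprime (p k0) (phat k0) := by
      rw [hphat_eq]
      exact IsCoprime.prod_right (fun j hj => hcop k0 j (Finset.ne_of_mem_erase hj).symm)
    have hdh : p k0 ∣ h k0 := by
      have h1 : p k0 ∣ h k0 * phat k0 := by
        rcases hg2 k0 hk0 with e | e
        · rw [e] at hterm; simpa using hterm
        · rw [e] at hterm
          rw [show (-1) * h k0 * phat k0 = -(h k0 * phat k0) by ring] at hterm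
          exact (dvd_neg).mp hterm
      exact hcop0.dvd_of_dvd_mul_right h1
    exact ht k0 hdh
  have himage_sub : E.image nm ⊆ Finset.Icc 1 (2*P) := by
    intro n hn
    obtain ⟨ε, _, rfl⟩ := Finset.mem_image.mp hn
    exact hnmIcc ε
  have hzero : ∀ n ∈ Finset.Icc (1:ℤ) (2*P), n ∉ E.image nm → F n = 0 := by
    intro n hn hnm'
    apply hFzero
    rintro ⟨ε, hε1, hε2⟩
    apply hnm'
    have hεE := hmemE' ε hε1
    have hneq : n = nm ε := by
      apply huniq n (nm ε) hn (hnmIcc ε)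
      have h3 : 2*P ∣ n - (P + S ε) := hε2
      have h4 := hnmdvd ε
      have := dvd_sub h3 h4
      convert this using 1
      · rfl
      ring
    exact Finset.mem_image.mpr ⟨ε, hεE, hneq.symm⟩
  have hkey := key_sum r s hs (fun j => h j * phat j)
  calc ∑ n ∈ Finset.Icc (1:ℤ) (2*P), F n
      = ∑ n ∈ E.image nm, F n := (Finset.sum_subset himage_sub hzero).symm
    _ = ∑ ε ∈ E, F (nm ε) := Finset.sum_image (fun ε hε ε' hε' => hinj ε hε ε' hε')
    _ = ∑ ε ∈ E, -(∏ j, ε j) * (S ε) ^ s :=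
        Finset.sum_congr rfl (fun ε hε => hFval (nm ε) ε (hmemE ε hε) (hnmdvd ε))
    _ = 0 := by
        simp only [neg_mul, Finset.sum_neg_distrib, neg_eq_zero]
        simpa only [← mul_assoc] using hkey
end

section
/- Generating identity for s-Hikami functions: with h ∈ 𝔥, t_h = 0, the finitely supported function m^s f^h on the set of representatives N^h(E) satisfies Σ_{n ∈ N^h(E)} m^s f^h(n) z^n = -z^P (z d/dz)^s ( ∏_{j=1}^r (z^{h_j p̂_j} - z^{-h_j p̂_j}) ) as an identity of Laurent polynomials in ℤ[z, z^{-1}]. -/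
set_option maxRecDepth 4000

open LaurentPolynomial Finset in
lemma T_sum_aux {ι : Type*} (t : Finset ι) (f : ι → ℤ) :
    (∏ j ∈ t, T (f j) : LaurentPolynomial ℤ) = T (∑ j ∈ t, f j) := by
  induction t using Finset.cons_induction with
  | empty => simp
  | cons a t ha ih => rw [Finset.prod_cons, Finset.sum_cons, ih, LaurentPolynomial.T_add]

open LaurentPolynomial in
/-- Generating identity for `s`-Hikami functions: with `h ∈ 𝔥`, `t_h = 0`,
`Σ_{n ∈ N^h(E)} m^s f^h(n) z^n = -z^P (z d/dz)^s (∏_j (z^{h_j p̂_j} - z^{-h_j p̂_j}))`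
in `ℤ[z, z⁻¹]`, where `D` denotes the (additive, monomial-scaling) operator
`z d/dz` and the sum over `N^h(E)` is parametrized by sign vectors. -/
theorem stmt_12 (r : ℕ) (hr : 3 ≤ r) (p : Fin r → ℤ)
    (hp : ∀ j, 0 < p j)
    (hcop : ∀ i j : Fin r, i ≠ j → IsCoprime (p i) (p j))
    (P : ℤ) (hP : P = ∏ j, p j)
    (phat : Fin r → ℤ) (hphat : ∀ j, p j * phat j = P)
    (h : Fin r → ℤ)
    (hh₁ : ∀ j, 0 ≤ h j ∧ h j ≤ p j)
    (hh₂ : 3 ≤ Set.ncard {j : Fin r | ¬ p j ∣ h j})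
    (ht : ∀ j, ¬ p j ∣ h j)
    (s : ℕ)
    (D : LaurentPolynomial ℤ → LaurentPolynomial ℤ)
    (hDadd : ∀ f g : LaurentPolynomial ℤ, D (f + g) = D f + D g)
    (hDT : ∀ n : ℤ, D (T n) = n • T n) :
    (∑ σ : Fin r → Bool,
      C (-(∏ j, if σ j then (1 : ℤ) else -1)
          * (∑ j, (if σ j then (1 : ℤ) else -1) * h j * phat j) ^ s)
        * T (P + ∑ j, (if σ j then (1 : ℤ) else -1) * h j * phat j))
    = -(T P * D^[s] (∏ j, (T (h j * phat j) - T (-(h j * phat j))))) := by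
  set e : Bool → ℤ := fun b => if b then 1 else -1 with he
  set Dh : LaurentPolynomial ℤ →+ LaurentPolynomial ℤ := AddMonoidHom.mk' D hDadd with hDh
  have hcast : ∀ c : ℤ, (C c : LaurentPolynomial ℤ) = (c : LaurentPolynomial ℤ) :=
    fun c => eq_intCast (C : ℤ →+* LaurentPolynomial ℤ) c
  have hDlin : ∀ (c : ℤ) (x : LaurentPolynomial ℤ), D (c • x) = c • D x :=
    fun c x => map_zsmul Dh c x
  have hmono : ∀ (s : ℕ) (c n : ℤ), D^[s] (C c * T n) = C (c * n ^ s) * T n := by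
    intro s
    induction s with
    | zero => intro c n; simp
    | succ s ih =>
      intro c n
      have h1 : D (C c * T n) = C (c * n) * T n := by
        rw [hcast, ← zsmul_eq_mul, hDlin, hDT, smul_smul, zsmul_eq_mul, ← hcast]
      rw [Function.iterate_succ_apply, h1, ih]
      congr 1
      rw [pow_succ]
      ring
  have hsum : ∀ (s : ℕ) {ι : Type} (t : Finset ι) (f : ι → LaurentPolynomial ℤ),
      D^[s] (∑ i ∈ t, f i) = ∑ i ∈ t, D^[s] (f i) := by
    intro s
    induction s with
    | zero => intro ι t f; simp
    | succ s ih =>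
      intro ι t f
      rw [Function.iterate_succ_apply', ih,
        show D (∑ i ∈ t, D^[s] (f i)) = ∑ i ∈ t, D (D^[s] (f i)) from
          map_sum Dh _ t]
      simp [Function.iterate_succ_apply']
  have hprod : (∏ j, (T (h j * phat j) - T (-(h j * phat j))) : LaurentPolynomial ℤ)
      = ∑ σ : Fin r → Bool, C (∏ j, e (σ j)) * T (∑ j, e (σ j) * h j * phat j) := by
    have step : ∀ j : Fin r, (T (h j * phat j) - T (-(h j * phat j)) : LaurentPolynomial ℤ)
        = ∑ b : Bool, C (e b) * T (e b * h j * phat j) := by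
      intro j
      rw [Fintype.sum_bool]
      simp only [he, if_true, if_false, Bool.false_eq_true]
      rw [map_one, map_neg, map_one, one_mul, one_mul, neg_one_mul, neg_one_mul,
        neg_mul, sub_eq_add_neg]
    calc (∏ j, (T (h j * phat j) - T (-(h j * phat j))) : LaurentPolynomial ℤ)
        = ∏ j, ∑ b : Bool, C (e b) * T (e b * h j * phat j) :=
          Finset.prod_congr rfl fun j _ => step j
      _ = ∑ σ : Fin r → Bool, ∏ j, C (e (σ j)) * T (e (σ j) * h j * phat j) :=
          Fintype.prod_sum _
      _ = ∑ σ : Fin r → Bool, C (∏ j, e (σ j)) * T (∑ j, e (σ j) * h j * phat j) := by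
          refine Finset.sum_congr rfl fun σ _ => ?_
          rw [Finset.prod_mul_distrib, map_prod, T_sum_aux]
  rw [hprod, hsum, Finset.mul_sum, ← Finset.sum_neg_distrib]
  refine Finset.sum_congr rfl fun σ _ => ?_
  simp only [he]
  rw [hmono, T_add, neg_mul, map_neg]
  ring
end

section
/- Vanishing of power moments: let h ∈ 𝔥 satisfy 0 < Σ_{j=1}^r h_j/p_j < 1, let J ⊂ {1,…,r} with J ∩ J^h = ∅ and |J| ≥ r - s for some 0 ≤ s ≤ r-3, and let g : ℤ → {-1,0,1} be the 2P-periodic generalized Hikami function g_J^h. Then Σ_{m=1}^{2P} m^a g(m) = 0 for every integer 0 ≤ a ≤ r - s - 1. -/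
open Polynomial in
lemma keyA {ι : Type*} [DecidableEq ι] (w c : ι → ℤ) (hw : ∀ j, w j = 1 ∨ w j = -1) :
    ∀ (K : Finset ι) (Q : Polynomial ℤ) (C : ℤ),
      Q.natDegree < (K.filter (fun j => w j = -1)).card →
      ∑ T ∈ K.powerset, (∏ j ∈ T, w j) * Q.eval (C + ∑ j ∈ K, c j - 2 * ∑ j ∈ T, c j) = 0 := by
  intro K
  induction K using Finset.induction_on with
  | empty => intro Q C hQ; simp at hQ
  | @insert j₀ K' hj₀ ih =>
    intro Q C hQ
    rw [Finset.sum_powerset_insert hj₀]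
    set R : Polynomial ℤ := Q.comp (X + Polynomial.C (c j₀)) + Polynomial.C (w j₀) * Q.comp (X - Polynomial.C (c j₀)) with hR
    have hxsub : X - Polynomial.C (c j₀) = X + Polynomial.C (-(c j₀)) := by
      simp [sub_eq_add_neg]
    have hRdeg1 : (Q.comp (X + Polynomial.C (c j₀))).natDegree = Q.natDegree := by
      rw [Polynomial.natDegree_comp, natDegree_X_add_C, mul_one]
    have hRdeg2 : (Q.comp (X - Polynomial.C (c j₀))).natDegree = Q.natDegree := by
      rw [Polynomial.natDegree_comp, hxsub, natDegree_X_add_C, mul_one]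
    have hmain : ∀ T ∈ K'.powerset,
        (∏ j ∈ T, w j) * Q.eval (C + ∑ j ∈ insert j₀ K', c j - 2 * ∑ j ∈ T, c j)
        + (∏ j ∈ insert j₀ T, w j) * Q.eval (C + ∑ j ∈ insert j₀ K', c j - 2 * ∑ j ∈ insert j₀ T, c j)
        = (∏ j ∈ T, w j) * R.eval (C + ∑ j ∈ K', c j - 2 * ∑ j ∈ T, c j) := by
      intro T hT
      have hTK : T ⊆ K' := Finset.mem_powerset.1 hT
      have hj₀T : j₀ ∉ T := fun hmem => hj₀ (hTK hmem)
      rw [Finset.sum_insert hj₀, Finset.sum_insert hj₀T, Finset.prod_insert hj₀T]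
      simp only [hR, Polynomial.eval_add, Polynomial.eval_mul, Polynomial.eval_comp,
        Polynomial.eval_C, Polynomial.eval_X, Polynomial.eval_sub]
      ring_nf
    rw [← Finset.sum_add_distrib, Finset.sum_congr rfl hmain]
    by_cases hR0 : R = 0
    · simp [hR0]
    · apply ih
      rcases hw j₀ with hw1 | hwm1
      · -- w j₀ = 1 : filter unchanged
        have hfilt : (insert j₀ K').filter (fun j => w j = -1) = K'.filter (fun j => w j = -1) := by
          rw [Finset.filter_insert, if_neg (by rw [hw1]; norm_num)]
        rw [hfilt] at hQ
        have h1 : R.natDegree ≤ Q.natDegree := by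
          refine le_trans (natDegree_add_le _ _) (max_le (le_of_eq hRdeg1) ?_)
          refine le_trans natDegree_mul_le ?_
          rw [natDegree_C, zero_add, hRdeg2]
        omega
      · -- w j₀ = -1 : strict degree drop
        have hfilt : (insert j₀ K').filter (fun j => w j = -1) = insert j₀ (K'.filter (fun j => w j = -1)) := by
          rw [Finset.filter_insert, if_pos hwm1]
        have hj₀f : j₀ ∉ K'.filter (fun j => w j = -1) := fun hm => hj₀ (Finset.mem_filter.1 hm).1
        rw [hfilt, Finset.card_insert_of_notMem hj₀f] at hQ
        have hQ0 : Q ≠ 0 := by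
          intro hq; apply hR0; simp [hR, hq]
        have hcomp0 : Q.comp (X - Polynomial.C (c j₀)) ≠ 0 := by
          intro hc
          rcases Polynomial.comp_eq_zero_iff.1 hc with hq | ⟨_, hXC⟩
          · exact hQ0 hq
          · have := congrArg Polynomial.natDegree hXC
            rw [hxsub, natDegree_X_add_C, natDegree_C] at this
            exact one_ne_zero this
        have hcomp0' : Q.comp (X + Polynomial.C (c j₀)) ≠ 0 := by
          intro hc
          rcases Polynomial.comp_eq_zero_iff.1 hc with hq | ⟨_, hXC⟩
          · exact hQ0 hq
          · have := congrArg Polynomial.natDegree hXC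
            rw [natDegree_X_add_C, natDegree_C] at this
            exact one_ne_zero this
        have hRsub : R = Q.comp (X + Polynomial.C (c j₀)) - Q.comp (X - Polynomial.C (c j₀)) := by
          rw [hR, hwm1, show Polynomial.C (-1 : ℤ) = -1 by simp]; ring
        have hdegeq : (Q.comp (X + Polynomial.C (c j₀))).degree = (Q.comp (X - Polynomial.C (c j₀))).degree := by
          rw [Polynomial.degree_eq_natDegree hcomp0', Polynomial.degree_eq_natDegree hcomp0, hRdeg1, hRdeg2]
        have hlc : (Q.comp (X + Polynomial.C (c j₀))).leadingCoeff = (Q.comp (X - Polynomial.C (c j₀))).leadingCoeff := by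
          rw [Polynomial.leadingCoeff_comp (by rw [natDegree_X_add_C]; norm_num),
            Polynomial.leadingCoeff_comp (by rw [hxsub, natDegree_X_add_C]; norm_num)]
          rw [hxsub, leadingCoeff_X_add_C, leadingCoeff_X_add_C]
        have hdeglt : R.degree < Q.degree := by
          rw [hRsub]
          refine lt_of_lt_of_le (Polynomial.degree_sub_lt hdegeq hcomp0' hlc) ?_
          rw [Polynomial.degree_eq_natDegree hcomp0', Polynomial.degree_eq_natDegree hQ0, hRdeg1]
        have : R.natDegree < Q.natDegree := Polynomial.natDegree_lt_natDegree hR0 hdeglt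
        omega

/-- Vanishing of power moments: let `h ∈ 𝔥` with `0 < Σ_j h_j/p_j < 1`, let
`J ⊂ {1,…,r}` with `J ∩ J^h = ∅` and `|J| ≥ r - s` for some `0 ≤ s ≤ r-3`, and
let `g` be the `2P`-periodic generalized Hikami function `g_J^h` (equal to
`∏_{j∈J} ε_j` at `n ≡ P + Σ_j ε_j h_j p̂_j mod 2P`, zero off `𝔖^h`).
Then `Σ_{m=1}^{2P} m^a g(m) = 0` for every `0 ≤ a ≤ r - s - 1`. -/
theorem stmt_13 (r : ℕ) (hr : 3 ≤ r) (p : Fin r → ℤ)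
    (hp : ∀ j, 0 < p j)
    (hcop : ∀ i j : Fin r, i ≠ j → IsCoprime (p i) (p j))
    (P : ℤ) (hP : P = ∏ j, p j)
    (phat : Fin r → ℤ) (hphat : ∀ j, p j * phat j = P)
    (h : Fin r → ℤ)
    (hh₁ : ∀ j, 0 ≤ h j ∧ h j ≤ p j)
    (hh₂ : 3 ≤ Set.ncard {j : Fin r | ¬ p j ∣ h j})
    (hsum₀ : 0 < ∑ j, (h j : ℚ) / (p j : ℚ))
    (hsum₁ : ∑ j, (h j : ℚ) / (p j : ℚ) < 1)
    (s : ℕ) (hs : s ≤ r - 3)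
    (J : Finset (Fin r))
    (hJh : ∀ j ∈ J, ¬ p j ∣ h j)
    (hJcard : r - s ≤ J.card)
    (g : ℤ → ℤ)
    (hgval : ∀ (n : ℤ) (ε : Fin r → ℤ), (∀ j, ε j = 1 ∨ ε j = -1) →
      2 * P ∣ n - (P + ∑ j, ε j * h j * phat j) →
      g n = ∏ j ∈ J, ε j)
    (hgzero : ∀ n : ℤ,
      (¬ ∃ ε : Fin r → ℤ, (∀ j, ε j = 1 ∨ ε j = -1) ∧
        2 * P ∣ n - (P + ∑ j, ε j * h j * phat j)) → g n = 0)
    (a : ℕ) (ha : a ≤ r - s - 1) :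
    ∑ m ∈ Finset.Icc (1 : ℤ) (2 * P), m ^ a * g m = 0 := by
  classical
  have hPpos : 0 < P := hP ▸ Finset.prod_pos (fun j _ => hp j)
  have hphatpos : ∀ j, 0 < phat j := by
    intro j
    nlinarith [hphat j, hp j, hPpos]
  set c : Fin r → ℤ := fun j => h j * phat j with hc
  have hcnn : ∀ j, 0 ≤ c j := fun j => mul_nonneg (hh₁ j).1 (hphatpos j).le
  -- sum of c is < P
  have hcsum : ∑ j, c j < P := by
    have hcast : ∀ j : Fin r, ((c j : ℚ)) = ((h j : ℚ) / p j) * P := by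
      intro j
      have hpj : (p j : ℚ) ≠ 0 := by exact_mod_cast (hp j).ne'
      have hppq : (p j : ℚ) * phat j = P := by exact_mod_cast hphat j
      have hphatq : (phat j : ℚ) = (P : ℚ) / p j := by
        rw [eq_div_iff hpj]; linarith
      push_cast [hc]
      rw [hphatq]; ring
    have : ((∑ j, c j : ℤ) : ℚ) < P := by
      push_cast
      calc ∑ j, ((c j : ℚ)) = (∑ j, (h j : ℚ) / p j) * P := by
            rw [Finset.sum_mul]; exact Finset.sum_congr rfl (fun j _ => hcast j)
        _ < 1 * P := by
            apply mul_lt_mul_of_pos_right hsum₁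
            exact_mod_cast hPpos
        _ = _ := one_mul _
    exact_mod_cast this
  -- h j < p j
  have hhlt : ∀ j, h j < p j := by
    intro j
    rcases lt_or_eq_of_le (hh₁ j).2 with hlt | heq
    · exact hlt
    · exfalso
      have h1 : (1 : ℚ) ≤ ∑ j', (h j' : ℚ) / p j' := by
        have hj1 : ((h j : ℚ) / p j) = 1 := by
          rw [heq]
          have : (p j : ℚ) ≠ 0 := by exact_mod_cast (hp j).ne'
          field_simp
        calc (1:ℚ) = (h j : ℚ) / p j := hj1.symm
          _ ≤ ∑ j', (h j' : ℚ) / p j' := by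
              apply Finset.single_le_sum (f := fun j' => (h j' : ℚ) / p j')
              · intro i _
                apply div_nonneg
                · exact_mod_cast (hh₁ i).1
                · exact_mod_cast (hp i).le
              · exact Finset.mem_univ j
      linarith
  have hdvd_iff : ∀ j, p j ∣ h j ↔ h j = 0 := by
    intro j
    constructor
    · intro hd
      by_contra h0
      have : 0 < h j := lt_of_le_of_ne (hh₁ j).1 (Ne.symm h0)
      have := Int.le_of_dvd this hd
      linarith [hhlt j]
    · intro h0; rw [h0]; exact dvd_zero _
  set D : Finset (Fin r) := Finset.univ.filter (fun j => h j ≠ 0) with hD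
  have hJD : J ⊆ D := by
    intro j hj
    simp only [hD, Finset.mem_filter, Finset.mem_univ, true_and]
    intro h0
    exact hJh j hj ((hdvd_iff j).2 h0)
  have hc0 : ∀ j ∉ D, c j = 0 := by
    intro j hj
    simp only [hD, Finset.mem_filter, Finset.mem_univ, true_and, not_not] at hj
    simp [hc, hj]
  have hsumD : ∑ j ∈ D, c j = ∑ j, c j :=
    Finset.sum_subset (Finset.subset_univ D) (fun j _ hj => hc0 j hj)
  set φ : Finset (Fin r) → ℤ := fun T => P + (∑ j, c j) - 2 * ∑ j ∈ T, c j with hφ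
  have hφrange : ∀ T : Finset (Fin r), 1 ≤ φ T ∧ φ T ≤ 2 * P - 1 := by
    intro T
    have h1 : 0 ≤ ∑ j ∈ T, c j := Finset.sum_nonneg (fun j _ => hcnn j)
    have h2 : ∑ j ∈ T, c j ≤ ∑ j, c j :=
      Finset.sum_le_sum_of_subset_of_nonneg (Finset.subset_univ T) (fun j _ _ => hcnn j)
    constructor <;> simp only [hφ] <;> omega
  -- divisibility facts
  have hphat_eq : ∀ j, phat j = ∏ j' ∈ Finset.univ.erase j, p j' := by
    intro j
    have hpe := hphat j
    rw [hP, ← Finset.mul_prod_erase Finset.univ p (Finset.mem_univ j)] at hpe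
    exact mul_left_cancel₀ (hp j).ne' hpe
  have hcop_phat : ∀ j, IsCoprime (p j) (phat j) := by
    intro j
    rw [hphat_eq j]
    exact IsCoprime.prod_right (fun j' hj' => hcop j j' (Finset.ne_of_mem_erase hj').symm)
  have hdvd_c : ∀ j₀ j : Fin r, j ≠ j₀ → p j₀ ∣ c j := by
    intro j₀ j hne
    have hdvdP : p j₀ ∣ P := ⟨phat j₀, (hphat j₀).symm⟩
    have hdpp : p j₀ ∣ p j * phat j := (hphat j) ▸ hdvdP
    have hdp : p j₀ ∣ phat j := (hcop j₀ j (fun he => hne he.symm)).dvd_of_dvd_mul_left hdpp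
    exact Dvd.dvd.mul_left hdp (h j)
  -- injectivity of φ on subsets of D
  have hinj_aux : ∀ T T' : Finset (Fin r), T ⊆ D → T' ⊆ D →
      (∑ j ∈ T, c j = ∑ j ∈ T', c j) → T ⊆ T' := by
    intro T T' hTD hT'D hsum
    intro j₀ hj₀T
    by_contra hj₀T'
    have key : ∑ j ∈ T \ T', c j - ∑ j ∈ T' \ T, c j = 0 := by
      have e1 : ∑ j ∈ T ∩ T', c j + ∑ j ∈ T \ T', c j = ∑ j ∈ T, c j :=
        Finset.sum_inter_add_sum_sdiff T T' c
      have e2 : ∑ j ∈ T' ∩ T, c j + ∑ j ∈ T' \ T, c j = ∑ j ∈ T', c j :=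
        Finset.sum_inter_add_sum_sdiff T' T c
      rw [Finset.inter_comm] at e2
      omega
    have hj₀mem : j₀ ∈ T \ T' := Finset.mem_sdiff.2 ⟨hj₀T, hj₀T'⟩
    have hd1 : p j₀ ∣ ∑ j ∈ (T \ T').erase j₀, c j :=
      Finset.dvd_sum (fun j hj => hdvd_c j₀ j (Finset.ne_of_mem_erase hj))
    have hd2 : p j₀ ∣ ∑ j ∈ T' \ T, c j := by
      apply Finset.dvd_sum
      intro j hj
      apply hdvd_c j₀ j
      intro he
      exact (Finset.mem_sdiff.1 hj).2 (he ▸ hj₀T)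
    have hsplit : c j₀ + ∑ j ∈ (T \ T').erase j₀, c j = ∑ j ∈ T \ T', c j :=
      Finset.add_sum_erase _ c hj₀mem
    have hdc : p j₀ ∣ c j₀ := by
      have he : c j₀ = ∑ j ∈ T' \ T, c j - ∑ j ∈ (T \ T').erase j₀, c j := by omega
      rw [he]
      exact dvd_sub hd2 hd1
    have hdh : p j₀ ∣ h j₀ := (hcop_phat j₀).dvd_of_dvd_mul_right hdc
    have hh0 : h j₀ = 0 := (hdvd_iff j₀).1 hdh
    have hjD : j₀ ∈ D := hTD hj₀T
    simp only [hD, Finset.mem_filter] at hjD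
    exact hjD.2 hh0
  have hinj : ∀ T ∈ D.powerset, ∀ T' ∈ D.powerset, φ T = φ T' → T = T' := by
    intro T hT T' hT' heq
    have hTD := Finset.mem_powerset.1 hT
    have hT'D := Finset.mem_powerset.1 hT'
    have hsum : ∑ j ∈ T, c j = ∑ j ∈ T', c j := by
      simp only [hφ] at heq; omega
    exact Finset.Subset.antisymm (hinj_aux T T' hTD hT'D hsum) (hinj_aux T' T hT'D hTD hsum.symm)
  -- sum over signs
  have hsumeps : ∀ ε : Fin r → ℤ, (∀ j, ε j = 1 ∨ ε j = -1) →
      ∑ j, ε j * h j * phat j = (∑ j, c j) - 2 * ∑ j ∈ D.filter (fun j => ε j = -1), c j := by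
    intro ε hε
    have key : ∑ j, (ε j * c j - c j) = ∑ j ∈ D.filter (fun j => ε j = -1), (-2) * c j := by
      rw [← Finset.sum_subset (Finset.subset_univ (D.filter (fun j => ε j = -1)))]
      · apply Finset.sum_congr rfl
        intro j hj
        have : ε j = -1 := (Finset.mem_filter.1 hj).2
        rw [this]; ring
      · intro j _ hj
        simp only [Finset.mem_filter] at hj
        by_cases hjD : j ∈ D
        · have : ε j = 1 := by
            rcases hε j with h1 | h2
            · exact h1
            · exact absurd ⟨hjD, h2⟩ hj
          rw [this]; ring
        · rw [hc0 j hjD]; ring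
    have e : ∀ j, ε j * h j * phat j = ε j * c j := fun j => by rw [hc]; ring
    rw [Finset.sum_congr rfl (fun j _ => e j)]
    have hsub : ∑ j, (ε j * c j - c j) = (∑ j, ε j * c j) - ∑ j, c j :=
      Finset.sum_sub_distrib _ _
    have hconst : ∑ j ∈ D.filter (fun j => ε j = -1), (-2) * c j
        = -2 * ∑ j ∈ D.filter (fun j => ε j = -1), c j := by
      rw [Finset.mul_sum]
    linarith [key, hsub, hconst]
  -- image of φ
  set img := D.powerset.image φ with himg
  have himgsub : img ⊆ Finset.Icc 1 (2*P) := by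
    intro m hm
    rcases Finset.mem_image.1 hm with ⟨T, hT, rfl⟩
    rcases hφrange T with ⟨h1, h2⟩
    exact Finset.mem_Icc.2 ⟨h1, by omega⟩
  -- value of g at φ T
  have hgφ : ∀ T ∈ D.powerset, g (φ T) = (-1 : ℤ) ^ (J ∩ T).card := by
    intro T hT
    have hTD := Finset.mem_powerset.1 hT
    set ε : Fin r → ℤ := fun j => if j ∈ T then -1 else 1 with hε
    have hεs : ∀ j, ε j = 1 ∨ ε j = -1 := by
      intro j; by_cases hj : j ∈ T <;> simp [hε, hj]
    have hfilt : D.filter (fun j => ε j = -1) = T := by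
      ext j
      simp only [Finset.mem_filter, hε]
      constructor
      · rintro ⟨hjD, hj⟩
        by_contra hjT
        rw [if_neg hjT] at hj; norm_num at hj
      · intro hjT
        exact ⟨hTD hjT, by rw [if_pos hjT]⟩
    have hNe : P + ∑ j, ε j * h j * phat j = φ T := by
      rw [hsumeps ε hεs, hfilt]; simp only [hφ]; ring
    have hval := hgval (φ T) ε hεs (by rw [hNe]; simp)
    rw [hval]
    have hprod : ∏ j ∈ J, ε j = ∏ j ∈ J.filter (fun j => j ∈ T), (-1 : ℤ) := by
      rw [Finset.prod_filter]
    rw [hprod, Finset.prod_const, Finset.filter_mem_eq_inter]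
  -- zero off image
  have hzero : ∀ m ∈ Finset.Icc (1:ℤ) (2*P), m ∉ img → m ^ a * g m = 0 := by
    intro m hm hmimg
    have hg0 : g m = 0 := by
      apply hgzero
      rintro ⟨ε, hεs, hdvd⟩
      set T := D.filter (fun j => ε j = -1) with hT
      have hTD : T ⊆ D := Finset.filter_subset _ _
      have hNe : P + ∑ j, ε j * h j * phat j = φ T := by
        rw [hsumeps ε hεs]; simp only [hφ]; ring
      rw [hNe] at hdvd
      rcases hφrange T with ⟨h1, h2⟩
      have hm' := Finset.mem_Icc.1 hm
      have hmeq : m = φ T := by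
        rcases hdvd with ⟨k, hk⟩
        have hk0 : k = 0 := by
          rcases lt_trichotomy k 0 with hlt | heq | hgt
          · nlinarith
          · exact heq
          · nlinarith
        rw [hk0] at hk; omega
      exact hmimg (Finset.mem_image.2 ⟨T, Finset.mem_powerset.2 hTD, hmeq.symm⟩)
    rw [hg0, mul_zero]
  -- reduce to sum over powerset
  rw [← Finset.sum_subset himgsub hzero, himg, Finset.sum_image hinj]
  rw [Finset.sum_congr rfl (fun T hT => by rw [hgφ T hT])]
  -- apply keyA
  set w : Fin r → ℤ := fun j => if j ∈ J then -1 else 1 with hw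
  have hws : ∀ j, w j = 1 ∨ w j = -1 := by
    intro j; by_cases hj : j ∈ J <;> simp [hw, hj]
  have hdeg : (Polynomial.X ^ a : Polynomial ℤ).natDegree < (D.filter (fun j => w j = -1)).card := by
    have hfilt : D.filter (fun j => w j = -1) = J := by
      ext j
      simp only [Finset.mem_filter, hw]
      constructor
      · rintro ⟨hjD, hj⟩
        by_contra hjJ
        rw [if_neg hjJ] at hj; norm_num at hj
      · intro hjJ
        exact ⟨hJD hjJ, by rw [if_pos hjJ]⟩
    rw [hfilt, Polynomial.natDegree_X_pow]
    omega
  have hA := keyA w c hws D (Polynomial.X ^ a) P hdeg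
  rw [hsumD] at hA
  rw [← hA]
  apply Finset.sum_congr rfl
  intro T hT
  have hprodw : ∏ j ∈ T, w j = (-1 : ℤ) ^ (J ∩ T).card := by
    have hprod : ∏ j ∈ T, w j = ∏ j ∈ T.filter (fun j => j ∈ J), (-1 : ℤ) := by
      rw [Finset.prod_filter]
    rw [hprod, Finset.prod_const, Finset.filter_mem_eq_inter, Finset.inter_comm]
  rw [hprodw]
  simp only [Polynomial.eval_pow, Polynomial.eval_X, hφ]
  ring
end

section
/- Chinese-remainder solvability on Hikami sets: let n ∈ ℤ and let J = { j ∈ {1,…,r} : p_j ∣ n } satisfy |J| ≤ r - 3. Then there exist a unique ℓ ∈ 𝔏(p₁,…,p_r) with J^ℓ = J and some ε ∈ {±1}^r such that n ≡ P + Σ_{j=1}^r ε_j ℓ_j (P/p_j) (mod 2P). Consequently, ℤ is the disjoint union of the set { n : |{j : p_j ∣ n}| > r-3 } and the Hikami sets 𝔖^ℓ, ℓ ∈ 𝔏. -/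

private lemma hikami_exists_odd (p c : ℤ) (hp : 0 < p) (hpo : Odd p) :
    ∃ l e : ℤ, (e = 1 ∨ e = -1) ∧ 0 ≤ l ∧ l ≤ p ∧ 2 ∣ l ∧ p ∣ e * c - l ∧ (p ∣ l ↔ p ∣ c) := by
  have h0 : 0 ≤ c % p := Int.emod_nonneg c hp.ne'
  have h1 : c % p < p := Int.emod_lt_of_pos c hp
  have hd : c - c % p = p * (c / p) := by rw [Int.emod_def]; ring
  have hiffc : p ∣ c % p ↔ p ∣ c := by
    constructor
    · intro h
      have h2 : c = (c - c % p) + c % p := by ring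
      rw [h2, hd]; exact dvd_add (dvd_mul_right p _) h
    · intro h
      have h2 : c % p = c - (c - c % p) := by ring
      rw [h2, hd]; exact dvd_sub h (dvd_mul_right p _)
  by_cases h2 : 2 ∣ c % p
  · exact ⟨c % p, 1, Or.inl rfl, h0, h1.le, h2, ⟨c / p, by linear_combination hd⟩, hiffc⟩
  · obtain ⟨s, hs⟩ := hpo
    refine ⟨p - c % p, -1, Or.inr rfl, by omega, by omega, by omega,
      ⟨-(c / p) - 1, by linear_combination -hd⟩, ?_⟩
    constructor
    · intro h
      refine hiffc.mp ?_
      have h3 : c % p = p - (p - c % p) := by ring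
      rw [h3]; exact dvd_sub dvd_rfl h
    · intro h
      exact dvd_sub dvd_rfl (hiffc.mpr h)

private lemma hikami_exists0 (p c : ℤ) (hp : 0 < p) :
    ∃ l e : ℤ, (e = 1 ∨ e = -1) ∧ 0 ≤ l ∧ l ≤ p ∧ 2 * p ∣ e * c - l ∧ (p ∣ l ↔ p ∣ c) := by
  have hp2 : (0:ℤ) < 2 * p := by linarith
  have h0 : 0 ≤ c % (2*p) := Int.emod_nonneg c hp2.ne'
  have h1 : c % (2*p) < 2*p := Int.emod_lt_of_pos c hp2
  have hd : c - c % (2*p) = 2*p * (c / (2*p)) := by rw [Int.emod_def]; ring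
  have hiffc : p ∣ c % (2*p) ↔ p ∣ c := by
    constructor
    · intro h
      have h2 : c = (c - c % (2*p)) + c % (2*p) := by ring
      rw [h2, hd]; exact dvd_add ⟨2 * (c/(2*p)), by ring⟩ h
    · intro h
      have h2 : c % (2*p) = c - (c - c % (2*p)) := by ring
      rw [h2, hd]; exact dvd_sub h ⟨2*(c/(2*p)), by ring⟩
  by_cases h2 : c % (2*p) ≤ p
  · exact ⟨c % (2*p), 1, Or.inl rfl, h0, h2, ⟨c/(2*p), by linear_combination hd⟩, hiffc⟩
  · refine ⟨2*p - c % (2*p), -1, Or.inr rfl, by omega, by omega,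
      ⟨-(c/(2*p)) - 1, by linear_combination -hd⟩, ?_⟩
    constructor
    · intro h
      refine hiffc.mp ?_
      have h3 : c % (2*p) = 2*p - (2*p - c % (2*p)) := by ring
      rw [h3]; exact dvd_sub ⟨2, by ring⟩ h
    · intro h
      exact dvd_sub ⟨2, by ring⟩ (hiffc.mpr h)

private lemma hikami_uniq0 (p a b : ℤ) (hp : 0 < p) (ha0 : 0 ≤ a) (ha1 : a ≤ p)
    (hb0 : 0 ≤ b) (hb1 : b ≤ p) (h : 2*p ∣ a - b ∨ 2*p ∣ a + b) : a = b := by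
  rcases h with ⟨k, hk⟩ | ⟨k, hk⟩
  · have hub : k < 1 := by
      have : 2*p*k < 2*p*1 := by nlinarith
      exact lt_of_mul_lt_mul_left this (by linarith)
    have hlb : -1 < k := by
      have : 2*p*(-1) < 2*p*k := by nlinarith
      exact lt_of_mul_lt_mul_left this (by linarith)
    have : k = 0 := by omega
    rw [this] at hk; omega
  · have hub : k ≤ 1 := by
      have : 2*p*k ≤ 2*p*1 := by nlinarith
      exact le_of_mul_le_mul_left this (by linarith)
    have hlb : 0 ≤ k := by
      have : 2*p*0 ≤ 2*p*k := by nlinarith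
      exact le_of_mul_le_mul_left this (by linarith)
    interval_cases k
    · omega
    · have : a + b = 2*p := by linarith [hk]
      omega

private lemma hikami_uniq_odd (p a b : ℤ) (hp : 0 < p) (hpo : Odd p) (ha2 : 2 ∣ a) (hb2 : 2 ∣ b)
    (ha0 : 0 ≤ a) (ha1 : a ≤ p) (hb0 : 0 ≤ b) (hb1 : b ≤ p)
    (h : p ∣ a - b ∨ p ∣ a + b) : a = b := by
  obtain ⟨s, hs⟩ := hpo
  rcases h with ⟨k, hk⟩ | ⟨k, hk⟩
  · have hub : k ≤ 1 := by
      have : p*k ≤ p*1 := by nlinarith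
      exact le_of_mul_le_mul_left this hp
    have hlb : -1 ≤ k := by
      have : p*(-1) ≤ p*k := by nlinarith
      exact le_of_mul_le_mul_left this hp
    interval_cases k <;> omega
  · have hub : k ≤ 2 := by
      have : p*k ≤ p*2 := by nlinarith
      exact le_of_mul_le_mul_left this hp
    have hlb : 0 ≤ k := by
      have : p*0 ≤ p*k := by nlinarith
      exact le_of_mul_le_mul_left this hp
    interval_cases k <;> omega

/-- Chinese-remainder solvability on Hikami sets: let `n ∈ ℤ` and let
`J = {j : p_j ∣ n}` satisfy `|J| ≤ r - 3`. Then there exists a unique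
`ℓ ∈ 𝔏(p₁,…,p_r)` with `J^ℓ = J` such that for some sign vector `ε`,
`n ≡ P + Σ_j ε_j ℓ_j (P/p_j) (mod 2P)`, i.e. `n` lies in the Hikami set `𝔖^ℓ`. -/
theorem stmt_15 (r : ℕ) (hr : 3 ≤ r) (p : Fin r → ℤ)
    (hp : ∀ j, 0 < p j)
    (hcop : ∀ i j : Fin r, i ≠ j → IsCoprime (p i) (p j))
    (hodd : ∀ j : Fin r, (j : ℕ) ≠ 0 → Odd (p j))
    (P : ℤ) (hP : P = ∏ j, p j)
    (phat : Fin r → ℤ) (hphat : ∀ j, p j * phat j = P)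
    (n : ℤ)
    (hJ : Set.ncard {j : Fin r | p j ∣ n} ≤ r - 3) :
    ∃! ℓ : Fin r → ℤ,
      ((∀ j, 0 ≤ ℓ j ∧ ℓ j ≤ p j) ∧
        3 ≤ Set.ncard {j : Fin r | ¬ p j ∣ ℓ j} ∧
        (∀ j : Fin r, (j : ℕ) ≠ 0 → 2 ∣ ℓ j)) ∧
      {j : Fin r | p j ∣ ℓ j} = {j : Fin r | p j ∣ n} ∧
      ∃ ε : Fin r → ℤ, (∀ j, ε j = 1 ∨ ε j = -1) ∧
        n ≡ P + ∑ j, ε j * ℓ j * phat j [ZMOD 2 * P] := by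
  have hr0 : 0 < r := by omega
  set z : Fin r := ⟨0, hr0⟩ with hzdef
  have hzval : ∀ j : Fin r, j ≠ z ↔ (j : ℕ) ≠ 0 := by
    intro j
    constructor <;> intro h <;> simp_all [Fin.ext_iff]
  have hpne : ∀ j, p j ≠ 0 := fun j => (hp j).ne'
  have hphat_eq : ∀ j, phat j = ∏ i ∈ Finset.univ.erase j, p i := by
    intro j
    have h1 : p j * phat j = p j * ∏ i ∈ Finset.univ.erase j, p i := by
      rw [hphat j, hP, Finset.mul_prod_erase _ _ (Finset.mem_univ j)]
    exact mul_left_cancel₀ (hpne j) h1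
  have hdvdP : ∀ j, p j ∣ P := fun j => hP ▸ Finset.dvd_prod_of_mem _ (Finset.mem_univ j)
  have hdvd_phat : ∀ i j : Fin r, i ≠ j → p i ∣ phat j := by
    intro i j hij
    rw [hphat_eq j]
    exact Finset.dvd_prod_of_mem _ (Finset.mem_erase.mpr ⟨hij, Finset.mem_univ i⟩)
  have hoddj : ∀ j : Fin r, j ≠ z → Odd (p j) := fun j h => hodd j ((hzval j).mp h)
  have hcop2 : ∀ j : Fin r, j ≠ z → IsCoprime 2 (p j) := by
    intro j h
    obtain ⟨s, hs⟩ := hoddj j h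
    exact ⟨-s, 1, by rw [hs]; ring⟩
  obtain ⟨m, hmz, hmo⟩ : ∃ m : Fin r → ℤ, m z = 2 * p z ∧ ∀ j, j ≠ z → m j = p j :=
    ⟨fun j => if j = z then 2 * p j else p j, by simp, fun j h => by simp [h]⟩
  obtain ⟨t, htz, hto⟩ : ∃ t : Fin r → ℤ, t z = n - P ∧ ∀ j, j ≠ z → t j = n :=
    ⟨fun j => if j = z then n - P else n, by simp, fun j h => by simp [h]⟩
  have hm_prod : ∏ j, m j = 2 * P := by
    have h1 : ∏ i ∈ Finset.univ.erase z, m i = ∏ i ∈ Finset.univ.erase z, p i :=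
      Finset.prod_congr rfl fun i hi => hmo i (Finset.mem_erase.mp hi).1
    calc ∏ j, m j = m z * ∏ i ∈ Finset.univ.erase z, m i :=
          (Finset.mul_prod_erase _ _ (Finset.mem_univ z)).symm
      _ = 2 * (p z * ∏ i ∈ Finset.univ.erase z, p i) := by rw [hmz, h1]; ring
      _ = 2 * P := by rw [Finset.mul_prod_erase _ _ (Finset.mem_univ z), ← hP]
  have hm_cop : ∀ i j : Fin r, i ≠ j → IsCoprime (m i) (m j) := by
    intro i j hij
    by_cases hi : i = z
    · subst hi
      rw [hmz, hmo j (Ne.symm hij)]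
      exact (hcop2 j (Ne.symm hij)).mul_left (hcop z j hij)
    · by_cases hj : j = z
      · subst hj
        rw [hmz, hmo i hi]
        exact ((hcop2 i hi).symm.mul_right (hcop i z hij))
      · rw [hmo i hi, hmo j hj]; exact hcop i j hij
  have hcop_phat_m : ∀ j, IsCoprime (phat j) (m j) := by
    intro j
    have hpp : IsCoprime (phat j) (p j) := by
      rw [hphat_eq j]
      exact IsCoprime.prod_left fun i hi => hcop i j (Finset.mem_erase.mp hi).1
    by_cases h : j = z
    · subst h
      rw [hmz]
      have hph_odd : Odd (phat z) := by
        rw [hphat_eq z]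
        refine Finset.prod_induction _ _ (fun a b => Odd.mul) odd_one ?_
        intro i hi; exact hoddj i (Finset.mem_erase.mp hi).1
      obtain ⟨s, hs⟩ := hph_odd
      exact IsCoprime.mul_right ⟨1, -s, by rw [hs]; ring⟩ hpp
    · rw [hmo j h]; exact hpp
  have huex : ∀ j, ∃ u : ℤ, m j ∣ 1 - phat j * u := by
    intro j
    obtain ⟨a, b, hab⟩ := hcop_phat_m j
    exact ⟨a, b, by linear_combination -hab⟩
  choose u hu using huex
  have hpm : ∀ j, p j ∣ m j := by
    intro j
    by_cases h : j = z
    · subst h; rw [hmz]; exact dvd_mul_left _ _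
    · rw [hmo j h]
  -- key equivalence
  have hequiv : ∀ ℓ e : Fin r → ℤ, (∀ j : Fin r, j ≠ z → 2 ∣ ℓ j) →
      ((2 * P ∣ P + (∑ j, e j * ℓ j * phat j) - n) ↔
        ∀ j, m j ∣ e j * ℓ j * phat j - t j) := by
    intro ℓ e heven
    have hkey : ∀ j, m j ∣ (P + (∑ i, e i * ℓ i * phat i) - n) - (e j * ℓ j * phat j - t j) := by
      intro j
      have hsplit : ∑ i, e i * ℓ i * phat i
          = e j * ℓ j * phat j + ∑ i ∈ Finset.univ.erase j, e i * ℓ i * phat i :=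
        (Finset.add_sum_erase _ _ (Finset.mem_univ j)).symm
      by_cases h : j = z
      · subst h
        rw [htz, hsplit]
        have h2 : P + (e z * ℓ z * phat z + ∑ i ∈ Finset.univ.erase z, e i * ℓ i * phat i)
            - n - (e z * ℓ z * phat z - (n - P))
            = ∑ i ∈ Finset.univ.erase z, e i * ℓ i * phat i := by ring
        rw [h2, hmz]
        refine Finset.dvd_sum ?_
        intro i hi
        have hiz := (Finset.mem_erase.mp hi).1
        obtain ⟨a, ha⟩ := heven i hiz
        obtain ⟨b, hb⟩ := hdvd_phat z i (Ne.symm hiz)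
        exact ⟨e i * a * b, by rw [ha, hb]; ring⟩
      · rw [hto j h, hsplit]
        have h2 : P + (e j * ℓ j * phat j + ∑ i ∈ Finset.univ.erase j, e i * ℓ i * phat i)
            - n - (e j * ℓ j * phat j - n)
            = P + ∑ i ∈ Finset.univ.erase j, e i * ℓ i * phat i := by ring
        rw [h2, hmo j h]
        refine dvd_add (hdvdP j) (Finset.dvd_sum ?_)
        intro i hi
        exact Dvd.dvd.mul_left (hdvd_phat j i (Ne.symm (Finset.mem_erase.mp hi).1)) _
    constructor
    · intro h j
      have h1 : m j ∣ P + (∑ i, e i * ℓ i * phat i) - n :=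
        dvd_trans (hm_prod ▸ Finset.dvd_prod_of_mem m (Finset.mem_univ j)) h
      have h3 : e j * ℓ j * phat j - t j
          = (P + (∑ i, e i * ℓ i * phat i) - n)
            - ((P + (∑ i, e i * ℓ i * phat i) - n) - (e j * ℓ j * phat j - t j)) := by ring
      rw [h3]
      exact dvd_sub h1 (hkey j)
    · intro h
      have h1 : ∀ j, m j ∣ P + (∑ i, e i * ℓ i * phat i) - n := by
        intro j
        have h3 : P + (∑ i, e i * ℓ i * phat i) - n
            = ((P + (∑ i, e i * ℓ i * phat i) - n) - (e j * ℓ j * phat j - t j))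
              + (e j * ℓ j * phat j - t j) := by ring
        rw [h3]
        exact dvd_add (hkey j) (h j)
      have h2 : (∏ j : Fin r, m j) ∣ P + (∑ i, e i * ℓ i * phat i) - n :=
        Finset.prod_dvd_of_coprime (fun i _ j _ hij => hm_cop i j hij) (fun j _ => h1 j)
      rwa [hm_prod] at h2
  -- per-coordinate solution
  have hsolve : ∀ j : Fin r, ∃ lj ej : ℤ, (ej = 1 ∨ ej = -1) ∧ 0 ≤ lj ∧ lj ≤ p j ∧
      (j ≠ z → 2 ∣ lj) ∧ m j ∣ ej * lj * phat j - t j ∧ (p j ∣ lj ↔ p j ∣ n) := by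
    intro j
    have hdvd_tc : p j ∣ t j - (t j * u j) * phat j := by
      obtain ⟨w, hw⟩ := hpm j
      obtain ⟨b, hb⟩ := hu j
      exact ⟨t j * w * b, by linear_combination (t j) * hb + (t j * b) * hw⟩
    have hcn : p j ∣ t j * u j ↔ p j ∣ n := by
      have h2 : p j ∣ t j * u j ↔ p j ∣ t j := by
        constructor
        · intro h
          have h3 : t j = (t j * u j) * phat j + (t j - (t j * u j) * phat j) := by ring
          rw [h3]
          exact dvd_add (h.mul_right _) hdvd_tc
        · intro h; exact h.mul_right _
      have h3 : p j ∣ t j ↔ p j ∣ n := by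
        by_cases h : j = z
        · subst h; rw [htz]
          constructor
          · intro h4
            have h5 : n = (n - P) + P := by ring
            rw [h5]; exact dvd_add h4 (hdvdP z)
          · intro h4; exact dvd_sub h4 (hdvdP z)
        · rw [hto j h]
      exact h2.trans h3
    by_cases h : j = z
    · subst h
      obtain ⟨lj, ej, hej, hl0, hl1, hcng, hif⟩ := hikami_exists0 (p z) (t z * u z) (hp z)
      have he2 : ej * ej = 1 := by rcases hej with h | h <;> rw [h] <;> ring
      refine ⟨lj, ej, hej, hl0, hl1, fun hh => absurd rfl hh, ?_, hif.trans hcn⟩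
      obtain ⟨a, ha⟩ := hcng
      obtain ⟨b, hb⟩ := hu z
      have hb' : 1 - phat z * u z = 2 * p z * b := by rw [← hmz]; exact hb
      rw [hmz]
      exact ⟨-ej * phat z * a - t z * b,
        by linear_combination (-(ej * phat z)) * ha - t z * hb' + (t z * u z * phat z) * he2⟩
    · obtain ⟨lj, ej, hej, hl0, hl1, hl2, hcng, hif⟩ :=
        hikami_exists_odd (p j) (t j * u j) (hp j) (hoddj j h)
      have he2 : ej * ej = 1 := by rcases hej with h' | h' <;> rw [h'] <;> ring
      refine ⟨lj, ej, hej, hl0, hl1, fun _ => hl2, ?_, hif.trans hcn⟩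
      obtain ⟨a, ha⟩ := hcng
      obtain ⟨b, hb⟩ := hu j
      have hb' : 1 - phat j * u j = p j * b := by rw [← hmo j h]; exact hb
      rw [hmo j h]
      exact ⟨-ej * phat j * a - t j * b,
        by linear_combination (-(ej * phat j)) * ha - t j * hb' + (t j * u j * phat j) * he2⟩
  choose L E hE hL0 hL1 hL2 hLc hLn using hsolve
  have hLeven : ∀ j : Fin r, j ≠ z → 2 ∣ L j := hL2
  -- assemble
  refine ⟨L, ⟨⟨fun j => ⟨hL0 j, hL1 j⟩, ?_, fun j hj => hL2 j ((hzval j).mpr hj)⟩, ?_, E, hE, ?_⟩, ?_⟩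
  · -- cardinality
    have hseteq : {j : Fin r | ¬ p j ∣ L j} = {j : Fin r | p j ∣ n}ᶜ := by
      ext j; simp [hLn j]
    rw [hseteq]
    have hc := Set.ncard_add_ncard_compl {j : Fin r | p j ∣ n}
    have hcard : Nat.card (Fin r) = r := by simp
    omega
  · ext j; simpa using hLn j
  · rw [Int.modEq_iff_dvd]
    exact (hequiv L E hLeven).mpr hLc
  · -- uniqueness
    rintro ℓ' ⟨⟨hb', hcard', hev'⟩, hset', e', he', hcong'⟩
    have hC' : ∀ j, m j ∣ e' j * ℓ' j * phat j - t j :=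
      (hequiv ℓ' e' (fun j hj => hev' j ((hzval j).mp hj))).mp (Int.modEq_iff_dvd.mp hcong')
    funext j
    obtain ⟨a, ha⟩ := dvd_sub (hC' j) (hLc j)
    obtain ⟨b, hb⟩ := hu j
    have he2 : E j * E j = 1 := by rcases hE j with h | h <;> rw [h] <;> ring
    have hdd : m j ∣ E j * e' j * ℓ' j - L j :=
      ⟨E j * u j * a + (E j * e' j * ℓ' j - L j) * b,
        by linear_combination (E j * u j) * ha + (E j * e' j * ℓ' j - L j) * hb
          + (L j * phat j * u j) * he2⟩
    have hee : E j * e' j = 1 ∨ E j * e' j = -1 := by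
      rcases hE j with h | h <;> rcases he' j with h' | h' <;> simp [h, h']
    have hcases : m j ∣ ℓ' j - L j ∨ m j ∣ ℓ' j + L j := by
      rcases hee with h | h
      · left; rw [h] at hdd; simpa using hdd
      · right
        rw [h] at hdd
        have h5 : -1 * ℓ' j - L j = -(ℓ' j + L j) := by ring
        rw [h5] at hdd
        exact dvd_neg.mp hdd
    by_cases hjz : j = z
    · subst hjz
      rw [hmz] at hcases
      exact hikami_uniq0 (p z) (ℓ' z) (L z) (hp z) (hb' z).1 (hb' z).2 (hL0 z) (hL1 z) hcases
    · rw [hmo j hjz] at hcases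
      exact hikami_uniq_odd (p j) (ℓ' j) (L j) (hp j) (hoddj j hjz)
        (hev' j ((hzval j).mp hjz)) (hL2 j hjz) (hb' j).1 (hb' j).2 (hL0 j) (hL1 j) hcases
end

section
/- Equivalence classes and the set 𝔏: define an equivalence relation on 𝔥 by h ∼ h' iff there exists J ⊂ {1,…,r} of even cardinality with h_j = p_j - h'_j for j ∈ J and h_j = h'_j for j ∉ J. Then 𝔏(p₁,…,p_r) is a complete system of representatives for 𝔥/∼, and h ∼ h' implies J^h = J^{h'} and 𝔖^h = 𝔖^{h'}. -/
/-- Membership in `𝔥(p₁,…,p_r)`: `0 ≤ h_j ≤ p_j` and `p_j ∤ h_j` for at least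
three indices `j`. -/
def memH {r : ℕ} (p h : Fin r → ℤ) : Prop :=
  (∀ j, 0 ≤ h j ∧ h j ≤ p j) ∧ 3 ≤ Set.ncard {j : Fin r | ¬ p j ∣ h j}

/-- Membership in `𝔏(p₁,…,p_r)`: in addition, `h_j` is even for all `j ≥ 2`
(here: for all indices other than the first). -/
def memL {r : ℕ} (p h : Fin r → ℤ) : Prop :=
  memH p h ∧ ∀ j : Fin r, (j : ℕ) ≠ 0 → 2 ∣ h j

/-- The equivalence relation on `𝔥`: `h ∼ h'` iff there is a subset `J` of even
cardinality with `h_j = p_j - h'_j` for `j ∈ J` and `h_j = h'_j` for `j ∉ J`. -/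
def hikamiRel {r : ℕ} (p h h' : Fin r → ℤ) : Prop :=
  ∃ J : Finset (Fin r), Even J.card ∧
    (∀ j ∈ J, h j = p j - h' j) ∧ (∀ j ∉ J, h j = h' j)

lemma sign_sum_even {r : ℕ} (J : Finset (Fin r)) (ε : Fin r → ℤ)
    (hJ : Even J.card) (hε : ∀ j, ε j = 1 ∨ ε j = -1) :
    (2:ℤ) ∣ ∑ j ∈ J, ε j := by
  have h1 : (2:ℤ) ∣ ∑ j ∈ J, (ε j - 1) := by
    refine Finset.dvd_sum fun j _ => ?_
    rcases hε j with h | h <;> simp [h]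
  have h2 : ∑ j ∈ J, (ε j - 1) = (∑ j ∈ J, ε j) - (J.card : ℤ) := by
    rw [Finset.sum_sub_distrib]; simp
  have h3 : (2:ℤ) ∣ (J.card : ℤ) := by exact_mod_cast hJ.two_dvd
  rw [h2] at h1
  omega

lemma S_transfer {r : ℕ} (p : Fin r → ℤ) (P : ℤ)
    (phat : Fin r → ℤ) (hphat : ∀ j, p j * phat j = P)
    (h h' : Fin r → ℤ) (hrel : hikamiRel p h h') (n : ℤ)
    (hex : ∃ ε : Fin r → ℤ, (∀ j, ε j = 1 ∨ ε j = -1) ∧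
      2 * P ∣ n - (P + ∑ j, ε j * h j * phat j)) :
    ∃ ε : Fin r → ℤ, (∀ j, ε j = 1 ∨ ε j = -1) ∧
      2 * P ∣ n - (P + ∑ j, ε j * h' j * phat j) := by
  classical
  obtain ⟨J, hJeven, hJin, hJout⟩ := hrel
  obtain ⟨ε, hε, hdvd⟩ := hex
  refine ⟨fun j => if j ∈ J then -ε j else ε j, ?_, ?_⟩
  · intro j; rcases hε j with h | h <;> by_cases hj : j ∈ J <;> simp [hj, h]
  · have key : ∑ j, (if j ∈ J then -ε j else ε j) * h' j * phat j
        = (∑ j, ε j * h j * phat j) - P * ∑ j ∈ J, ε j := by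
      have e : ∀ j, (if j ∈ J then -ε j else ε j) * h' j * phat j
          = ε j * h j * phat j - (if j ∈ J then P * ε j else 0) := by
        intro j
        by_cases hj : j ∈ J
        · simp only [if_pos hj]
          linear_combination (-(ε j) * phat j) * (hJin j hj) + (-(ε j)) * (hphat j)
        · simp [hj, hJout j hj]
      calc ∑ j, (if j ∈ J then -ε j else ε j) * h' j * phat j
          = ∑ j, (ε j * h j * phat j - (if j ∈ J then P * ε j else 0)) :=
            Finset.sum_congr rfl fun j _ => e j
        _ = (∑ j, ε j * h j * phat j) - ∑ j, (if j ∈ J then P * ε j else 0) :=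
            Finset.sum_sub_distrib _ _
        _ = (∑ j, ε j * h j * phat j) - P * ∑ j ∈ J, ε j := by
            rw [Finset.sum_ite_mem, Finset.univ_inter, Finset.mul_sum]
    rw [key]
    have h2 : 2 * P ∣ P * ∑ j ∈ J, ε j := by
      obtain ⟨c, hc⟩ := sign_sum_even J ε hJeven hε
      exact ⟨c, by rw [hc]; ring⟩
    have : n - (P + ((∑ j, ε j * h j * phat j) - P * ∑ j ∈ J, ε j))
        = (n - (P + ∑ j, ε j * h j * phat j)) + P * ∑ j ∈ J, ε j := by ring
    rw [this]
    exact dvd_add hdvd h2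

lemma hikami_symm {r : ℕ} (p h h' : Fin r → ℤ) (hrel : hikamiRel p h h') :
    hikamiRel p h' h := by
  obtain ⟨J, hJ, hin, hout⟩ := hrel
  exact ⟨J, hJ, fun j hj => by have := hin j hj; linarith,
    fun j hj => (hout j hj).symm⟩

/-- `𝔏(p₁,…,p_r)` is a complete system of representatives of `𝔥/∼`, and
`h ∼ h'` implies `J^h = J^{h'}` and `𝔖^h = 𝔖^{h'}`. -/
theorem stmt_16 (r : ℕ) (hr : 3 ≤ r) (p : Fin r → ℤ)
    (hp : ∀ j, 0 < p j)
    (hcop : ∀ i j : Fin r, i ≠ j → IsCoprime (p i) (p j))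
    (hodd : ∀ j : Fin r, (j : ℕ) ≠ 0 → Odd (p j))
    (P : ℤ) (hP : P = ∏ j, p j)
    (phat : Fin r → ℤ) (hphat : ∀ j, p j * phat j = P) :
    (∀ h : Fin r → ℤ, memH p h →
      ∃! ℓ : Fin r → ℤ, memL p ℓ ∧ hikamiRel p h ℓ) ∧
    (∀ h h' : Fin r → ℤ, memH p h → memH p h' → hikamiRel p h h' →
      ({j : Fin r | p j ∣ h j} = {j : Fin r | p j ∣ h' j}) ∧
      (∀ n : ℤ,
        (∃ ε : Fin r → ℤ, (∀ j, ε j = 1 ∨ ε j = -1) ∧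
          2 * P ∣ n - (P + ∑ j, ε j * h j * phat j)) ↔
        (∃ ε : Fin r → ℤ, (∀ j, ε j = 1 ∨ ε j = -1) ∧
          2 * P ∣ n - (P + ∑ j, ε j * h' j * phat j)))) := by
  classical
  constructor
  · -- part 1
    intro h hh
    set i0 : Fin r := ⟨0, by omega⟩ with hi0
    have hne0 : ∀ j : Fin r, (j : ℕ) ≠ 0 ↔ j ≠ i0 := by
      intro j
      constructor
      · intro hj hc; apply hj; rw [hc]
      · intro hj hc; exact hj (Fin.ext hc)
    set J0 : Finset (Fin r) := Finset.univ.filter (fun j => (j : ℕ) ≠ 0 ∧ ¬ 2 ∣ h j) with hJ0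
    have hi0J0 : i0 ∉ J0 := by simp [hJ0, hi0]
    set J : Finset (Fin r) := if Even J0.card then J0 else insert i0 J0 with hJdef
    have hJeven : Even J.card := by
      by_cases hc : Even J0.card
      · simp [hJdef, hc]
      · simp only [hJdef, if_neg hc]
        rw [Finset.card_insert_of_notMem hi0J0]
        rw [Nat.even_add_one]
        exact hc
    set ℓ : Fin r → ℤ := fun j => if j ∈ J then p j - h j else h j with hℓdef
    have hmemJ0 : ∀ j : Fin r, j ≠ i0 → (j ∈ J ↔ ¬ 2 ∣ h j) := by
      intro j hj
      have : j ∈ J ↔ j ∈ J0 := by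
        by_cases hc : Even J0.card
        · simp [hJdef, hc]
        · simp [hJdef, hc, Finset.mem_insert, hj]
      rw [this, hJ0]
      simp [Finset.mem_filter, (hne0 j).mpr hj]
    have hrel : hikamiRel p h ℓ := by
      refine ⟨J, hJeven, fun j hj => ?_, fun j hj => ?_⟩
      · simp only [hℓdef, if_pos hj]; ring
      · simp [hℓdef, hj]
    have hdvdℓ : ∀ j, (p j ∣ ℓ j ↔ p j ∣ h j) := by
      intro j
      by_cases hj : j ∈ J
      · simp only [hℓdef, if_pos hj]
        constructor
        · intro hd; have := dvd_sub (dvd_refl (p j)) hd; simpa using this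
        · intro hd; exact dvd_sub (dvd_refl (p j)) hd
      · simp [hℓdef, hj]
    have hmemL : memL p ℓ := by
      refine ⟨⟨fun j => ?_, ?_⟩, fun j hj => ?_⟩
      · obtain ⟨h1, h2⟩ := hh.1 j
        by_cases hj : j ∈ J <;> simp only [hℓdef, if_pos, if_neg, hj, if_true, if_false] <;>
          constructor <;> linarith
      · have : {j : Fin r | ¬ p j ∣ ℓ j} = {j : Fin r | ¬ p j ∣ h j} := by
          ext j; simp [hdvdℓ j]
        rw [this]; exact hh.2
      · rw [hne0] at hj
        by_cases hc : j ∈ J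
        · have hodd' := hodd j ((hne0 j).mpr hj)
          have hoddh : ¬ 2 ∣ h j := (hmemJ0 j hj).mp hc
          simp only [hℓdef, if_pos hc]
          rw [Int.odd_iff] at hodd'
          omega
        · have : 2 ∣ h j := by
            by_contra hcon
            exact hc ((hmemJ0 j hj).mpr hcon)
          simpa [hℓdef, hc] using this
    refine ⟨ℓ, ⟨hmemL, hrel⟩, ?_⟩
    -- uniqueness
    intro ℓ' ⟨hmemL', hrel'⟩
    obtain ⟨K, hKeven, hKin, hKout⟩ := hrel'
    -- for j ≠ i0 : j ∈ K ↔ ¬ 2 ∣ h j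
    have hmemK : ∀ j : Fin r, j ≠ i0 → (j ∈ K ↔ ¬ 2 ∣ h j) := by
      intro j hj
      have hℓeven : 2 ∣ ℓ' j := hmemL'.2 j ((hne0 j).mpr hj)
      have hpodd : ¬ 2 ∣ p j := by
        have := hodd j ((hne0 j).mpr hj); rw [Int.odd_iff] at this; omega
      constructor
      · intro hk
        have := hKin j hk
        intro hcon
        obtain ⟨a, ha⟩ := hℓeven; obtain ⟨b, hb⟩ := hcon
        apply hpodd; exact ⟨a + b, by linarith⟩
      · intro hcon
        by_contra hk
        apply hcon
        rw [hKout j hk]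
        exact hℓeven
    have heraseeq : K.erase i0 = J.erase i0 := by
      ext j
      simp only [Finset.mem_erase]
      constructor
      · rintro ⟨hj, hjK⟩; exact ⟨hj, (hmemJ0 j hj).mpr ((hmemK j hj).mp hjK)⟩
      · rintro ⟨hj, hjJ⟩; exact ⟨hj, (hmemK j hj).mpr ((hmemJ0 j hj).mp hjJ)⟩
    have hi0mem : i0 ∈ K ↔ i0 ∈ J := by
      have cK : K.card = (K.erase i0).card + (if i0 ∈ K then 1 else 0) := by
        by_cases hc : i0 ∈ K
        · simp [hc, Finset.card_erase_of_mem hc, Nat.sub_add_cancel (Finset.card_pos.mpr ⟨i0, hc⟩)]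
        · simp [hc, Finset.erase_eq_of_notMem hc]
      have cJ : J.card = (J.erase i0).card + (if i0 ∈ J then 1 else 0) := by
        by_cases hc : i0 ∈ J
        · simp [hc, Finset.card_erase_of_mem hc, Nat.sub_add_cancel (Finset.card_pos.mpr ⟨i0, hc⟩)]
        · simp [hc, Finset.erase_eq_of_notMem hc]
      rw [heraseeq] at cK
      constructor
      · intro h1
        by_contra h2
        rw [cK, if_pos h1] at hKeven
        rw [cJ, if_neg h2] at hJeven
        rcases hKeven with ⟨a, ha⟩; rcases hJeven with ⟨b, hb⟩; omega
      · intro h2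
        by_contra h1
        rw [cK, if_neg h1] at hKeven
        rw [cJ, if_pos h2] at hJeven
        rcases hKeven with ⟨a, ha⟩; rcases hJeven with ⟨b, hb⟩; omega
    funext j
    by_cases hj : j ∈ K
    · have hjJ : j ∈ J := by
        by_cases hc : j = i0
        · subst hc; exact hi0mem.mp hj
        · exact (hmemJ0 j hc).mpr ((hmemK j hc).mp hj)
      have := hKin j hj
      simp only [hℓdef, if_pos hjJ]
      linarith
    · have hjJ : j ∉ J := by
        by_cases hc : j = i0
        · subst hc; exact fun hcon => hj (hi0mem.mpr hcon)
        · exact fun hcon => hj ((hmemK j hc).mpr ((hmemJ0 j hc).mp hcon))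
      rw [← hKout j hj]
      simp [hℓdef, hjJ]
  · -- part 2
    intro h h' hh hh' hrel
    constructor
    · obtain ⟨J, hJ, hin, hout⟩ := hrel
      ext j
      simp only [Set.mem_setOf_eq]
      by_cases hj : j ∈ J
      · rw [hin j hj]
        constructor
        · intro hd; have := dvd_sub (dvd_refl (p j)) hd; simpa using this
        · intro hd; exact dvd_sub (dvd_refl (p j)) hd
      · rw [hout j hj]
    · intro n
      exact ⟨S_transfer p P phat hphat h h' hrel n,
        S_transfer p P phat hphat h' h (hikami_symm p h h' hrel) n⟩
end

section
/- For h ∼ h' in 𝔥 with t_h = t_{h'} = 0, the 0-Hikami functions coincide: m⁰f^h = m⁰f^{h'} as functions ℤ → ℤ. (Proof via generating functions: if h, h' differ by the involution on an even-cardinality set J, then ∏_j (z^{h'_j p̂_j} - z^{-h'_j p̂_j}) = (-z^P)^{|J|} ∏_j (z^{h_j p̂_j} - z^{-h_j p̂_j}), and (-z^P)^{|J|} = z^{|J|P} acts as multiplication by a power of z^{2P}, modulo which the generating functions of 2P-periodic sequences are compared.) -/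
lemma stmt_17_key {r : ℕ} (p : Fin r → ℤ) (P : ℤ) (phat : Fin r → ℤ)
    (hphat : ∀ j, p j * phat j = P)
    (J : Finset (Fin r)) (hJ : Even J.card)
    (h h' : Fin r → ℤ) (hJ1 : ∀ j ∈ J, h j = p j - h' j) (hJ2 : ∀ j ∉ J, h j = h' j)
    (n : ℤ) (ε : Fin r → ℤ) (hε : ∀ j, ε j = 1 ∨ ε j = -1)
    (hdvd : 2 * P ∣ n - (P + ∑ j, ε j * h j * phat j)) :
    ∃ ε' : Fin r → ℤ, (∀ j, ε' j = 1 ∨ ε' j = -1) ∧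
      (2 * P ∣ n - (P + ∑ j, ε' j * h' j * phat j)) ∧ (∏ j, ε' j) = ∏ j, ε j := by
  refine ⟨fun j => if j ∈ J then -ε j else ε j, ?_, ?_, ?_⟩
  · intro j
    by_cases hj : j ∈ J <;> simp only [hj, if_true, if_false] <;>
      rcases hε j with e | e <;> simp [e]
  · have hsum : (∑ j, ε j * h j * phat j)
        - ∑ j, (if j ∈ J then -ε j else ε j) * h' j * phat j
        = (∑ j ∈ J, ε j) * P := by
      rw [← Finset.sum_sub_distrib, Finset.sum_mul]
      have : ∀ j : Fin r, ε j * h j * phat j - (if j ∈ J then -ε j else ε j) * h' j * phat j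
          = if j ∈ J then ε j * P else 0 := by
        intro j
        by_cases hj : j ∈ J
        · simp only [hj, if_true]
          rw [hJ1 j hj, ← hphat j]; ring
        · simp only [hj, if_false]
          rw [hJ2 j hj]; ring
      simp only [this]
      rw [Finset.sum_ite_mem, Finset.univ_inter]
    have heven : Even (∑ j ∈ J, ε j) := by
      have h1 : Even (∑ j ∈ J, (ε j - 1)) := by
        apply Finset.even_sum
        intro j _
        rcases hε j with e | e <;> simp [e]
      have h2 : (∑ j ∈ J, ε j) = (∑ j ∈ J, (ε j - 1)) + J.card := by
        rw [Finset.sum_sub_distrib]; simp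
      rw [h2]
      exact h1.add (Int.even_coe_nat _ |>.mpr hJ)
    obtain ⟨k, hk⟩ := heven
    have hdvd2 : 2 * P ∣ (∑ j, ε j * h j * phat j)
        - ∑ j, (if j ∈ J then -ε j else ε j) * h' j * phat j := by
      rw [hsum, hk]
      exact ⟨k, by ring⟩
    have : 2 * P ∣ _ := dvd_add hdvd hdvd2
    convert this using 1; ring
  · have : ∀ j : Fin r, (if j ∈ J then -ε j else ε j)
        = (if j ∈ J then (-1 : ℤ) else 1) * ε j := by
      intro j; by_cases hj : j ∈ J <;> simp [hj]
    simp only [this]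
    rw [Finset.prod_mul_distrib]
    rw [Finset.prod_ite_mem, Finset.univ_inter, Finset.prod_const]
    rw [hJ.neg_one_pow, one_mul]

/-- For `h ∼ h'` in `𝔥` with `t_h = t_{h'} = 0`, the `0`-Hikami functions
coincide: `m⁰f^h = m⁰f^{h'}` as functions `ℤ → ℤ` (each is the `2P`-periodic
function equal to `-ε₁⋯ε_r` at `n ≡ P + Σ_j ε_j h_j p̂_j (mod 2P)` and `0` off
the Hikami set). -/
theorem stmt_17 (r : ℕ) (hr : 3 ≤ r) (p : Fin r → ℤ)
    (hp : ∀ j, 0 < p j)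
    (hcop : ∀ i j : Fin r, i ≠ j → IsCoprime (p i) (p j))
    (P : ℤ) (hP : P = ∏ j, p j)
    (phat : Fin r → ℤ) (hphat : ∀ j, p j * phat j = P)
    (h h' : Fin r → ℤ)
    (hh₁ : ∀ j, 0 ≤ h j ∧ h j ≤ p j)
    (hh₂ : 3 ≤ Set.ncard {j : Fin r | ¬ p j ∣ h j})
    (hh'₁ : ∀ j, 0 ≤ h' j ∧ h' j ≤ p j)
    (hh'₂ : 3 ≤ Set.ncard {j : Fin r | ¬ p j ∣ h' j})
    (ht : ∀ j, ¬ p j ∣ h j) (ht' : ∀ j, ¬ p j ∣ h' j)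
    (hrel : ∃ J : Finset (Fin r), Even J.card ∧
      (∀ j ∈ J, h j = p j - h' j) ∧ (∀ j ∉ J, h j = h' j))
    (F F' : ℤ → ℤ)
    (hFval : ∀ (n : ℤ) (ε : Fin r → ℤ), (∀ j, ε j = 1 ∨ ε j = -1) →
      2 * P ∣ n - (P + ∑ j, ε j * h j * phat j) → F n = -(∏ j, ε j))
    (hFzero : ∀ n : ℤ,
      (¬ ∃ ε : Fin r → ℤ, (∀ j, ε j = 1 ∨ ε j = -1) ∧
        2 * P ∣ n - (P + ∑ j, ε j * h j * phat j)) → F n = 0)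
    (hF'val : ∀ (n : ℤ) (ε : Fin r → ℤ), (∀ j, ε j = 1 ∨ ε j = -1) →
      2 * P ∣ n - (P + ∑ j, ε j * h' j * phat j) → F' n = -(∏ j, ε j))
    (hF'zero : ∀ n : ℤ,
      (¬ ∃ ε : Fin r → ℤ, (∀ j, ε j = 1 ∨ ε j = -1) ∧
        2 * P ∣ n - (P + ∑ j, ε j * h' j * phat j)) → F' n = 0) :
    F = F' := by
  obtain ⟨J, hJeven, hJ1, hJ2⟩ := hrel
  have hJ1' : ∀ j ∈ J, h' j = p j - h j := by
    intro j hj; have := hJ1 j hj; linarith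
  have hJ2' : ∀ j ∉ J, h' j = h j := by
    intro j hj; exact (hJ2 j hj).symm
  funext n
  by_cases hex : ∃ ε : Fin r → ℤ, (∀ j, ε j = 1 ∨ ε j = -1) ∧
      2 * P ∣ n - (P + ∑ j, ε j * h j * phat j)
  · obtain ⟨ε, hε, hdvd⟩ := hex
    obtain ⟨ε', hε', hdvd', hprod⟩ :=
      stmt_17_key p P phat hphat J hJeven h h' hJ1 hJ2 n ε hε hdvd
    rw [hFval n ε hε hdvd, hF'val n ε' hε' hdvd', hprod]
  · rw [hFzero n hex]
    rw [hF'zero n]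
    rintro ⟨ε', hε', hdvd'⟩
    obtain ⟨ε, hε, hdvd, -⟩ :=
      stmt_17_key p P phat hphat J hJeven h' h hJ1' hJ2' n ε' hε' hdvd'
    exact hex ⟨ε, hε, hdvd⟩
end

section
/- Mean value of generalized Hikami functions: for h ∈ 𝔥 and nonempty J ⊂ {1,…,r} with J ∩ J^h = ∅, the function g_J^h has zero mean value: Σ_{n=1}^{2P} g_J^h(n) = 0. (This follows from the identity 2^{t_h}·Σ_{n mod 2P} g_J^h(n) z^n ≡ z^P ∏_{j∉J}(z^{h_j p̂_j}+z^{-h_j p̂_j}) ∏_{j∈J}(z^{h_j p̂_j}-z^{-h_j p̂_j}) in ℤ[z]/(z^{2P}-1), evaluated at z = 1, since each factor indexed by j ∈ J vanishes at z = 1.) -/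
/-- Mean value of generalized Hikami functions: for `h ∈ 𝔥` and nonempty
`J ⊂ {1,…,r}` with `J ∩ J^h = ∅`, the `2P`-periodic function `g = g_J^h`
(equal to `∏_{j∈J} ε_j` at `n ≡ P + Σ_j ε_j h_j p̂_j (mod 2P)`, zero off
`𝔖^h`) has zero mean value: `Σ_{n=1}^{2P} g(n) = 0`. -/
theorem stmt_19 (r : ℕ) (hr : 3 ≤ r) (p : Fin r → ℤ)
    (hp : ∀ j, 0 < p j)
    (hcop : ∀ i j : Fin r, i ≠ j → IsCoprime (p i) (p j))
    (P : ℤ) (hP : P = ∏ j, p j)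
    (phat : Fin r → ℤ) (hphat : ∀ j, p j * phat j = P)
    (h : Fin r → ℤ)
    (hh₁ : ∀ j, 0 ≤ h j ∧ h j ≤ p j)
    (hh₂ : 3 ≤ Set.ncard {j : Fin r | ¬ p j ∣ h j})
    (J : Finset (Fin r))
    (hJne : J.Nonempty)
    (hJh : ∀ j ∈ J, ¬ p j ∣ h j)
    (g : ℤ → ℤ)
    (hgval : ∀ (n : ℤ) (ε : Fin r → ℤ), (∀ j, ε j = 1 ∨ ε j = -1) →
      2 * P ∣ n - (P + ∑ j, ε j * h j * phat j) → g n = ∏ j ∈ J, ε j)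
    (hgzero : ∀ n : ℤ,
      (¬ ∃ ε : Fin r → ℤ, (∀ j, ε j = 1 ∨ ε j = -1) ∧
        2 * P ∣ n - (P + ∑ j, ε j * h j * phat j)) → g n = 0) :
    ∑ n ∈ Finset.Icc (1 : ℤ) (2 * P), g n = 0 := by
  classical
  obtain ⟨j₀, hj₀J⟩ := hJne
  have hPpos : 0 < P := by
    rw [hP]; exact Finset.prod_pos fun j _ => hp j
  have hTpos : 0 < 2 * P := by linarith
  -- p i divides phat j for i ≠ j
  have hdvd_phat : ∀ i j : Fin r, i ≠ j → p i ∣ phat j := by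
    intro i j hij
    have h1 : p i ∣ p j * phat j := by
      rw [hphat j]; exact ⟨phat i, (hphat i).symm⟩
    exact (hcop i j hij).dvd_of_dvd_mul_left h1
  have hcop_phat : ∀ i : Fin r, IsCoprime (p i) (phat i) := by
    intro i
    have h1 : phat i = ∏ j ∈ Finset.univ.erase i, p j := by
      have h2 : p i * phat i = p i * ∏ j ∈ Finset.univ.erase i, p j := by
        rw [hphat i, hP, Finset.mul_prod_erase _ _ (Finset.mem_univ i)]
      exact mul_left_cancel₀ (hp i).ne' h2
    rw [h1]
    exact IsCoprime.prod_right fun j hj => hcop i j (Finset.ne_of_mem_erase hj).symm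
  have hpj₀ : ¬ p j₀ ∣ h j₀ := hJh j₀ hj₀J
  have hpj₀P : p j₀ ∣ P := ⟨phat j₀, (hphat j₀).symm⟩
  set S : (Fin r → ℤ) → ℤ := fun ε => P + ∑ j, ε j * h j * phat j with hS
  -- key uniqueness of the sign at j₀
  have key : ∀ ε ε' : Fin r → ℤ, (∀ j, ε j = 1 ∨ ε j = -1) → (∀ j, ε' j = 1 ∨ ε' j = -1) →
      2 * P ∣ S ε - S ε' → ε j₀ = ε' j₀ := by
    intro ε ε' hε hε' hdvd
    by_contra hne
    set d : Fin r → ℤ := fun j => if ε j = ε' j then 0 else ε j with hd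
    have hdiff : ∀ j, ε j - ε' j = 2 * d j := by
      intro j
      rcases hε j with h1 | h1 <;> rcases hε' j with h2 | h2 <;>
        simp [hd, h1, h2] <;> norm_num
    have hSd : S ε - S ε' = 2 * ∑ j, d j * h j * phat j := by
      simp only [hS]
      rw [Finset.mul_sum]
      have h1 : ∀ j ∈ Finset.univ,
          ε j * h j * phat j - ε' j * h j * phat j = 2 * (d j * h j * phat j) := by
        intro j _
        linear_combination (h j * phat j) * (hdiff j)
      calc P + ∑ j, ε j * h j * phat j - (P + ∑ j, ε' j * h j * phat j)
          = ∑ j, (ε j * h j * phat j - ε' j * h j * phat j) := by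
            rw [Finset.sum_sub_distrib]; ring
        _ = ∑ j, 2 * (d j * h j * phat j) := Finset.sum_congr rfl h1
    obtain ⟨k, hk⟩ := hdvd
    have hY : ∑ j, d j * h j * phat j = P * k := by
      rw [hSd] at hk; linarith
    have hPY : p j₀ ∣ ∑ j, d j * h j * phat j := hY ▸ Dvd.dvd.mul_right hpj₀P k
    have hsplit : ∑ j, d j * h j * phat j
        = d j₀ * h j₀ * phat j₀ + ∑ j ∈ Finset.univ.erase j₀, d j * h j * phat j :=
      (Finset.add_sum_erase _ _ (Finset.mem_univ j₀)).symm
    have hrest : p j₀ ∣ ∑ j ∈ Finset.univ.erase j₀, d j * h j * phat j :=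
      Finset.dvd_sum fun j hj =>
        Dvd.dvd.mul_left (hdvd_phat j₀ j (Finset.ne_of_mem_erase hj).symm) _
    have hterm : p j₀ ∣ d j₀ * h j₀ * phat j₀ := by
      have := dvd_sub hPY hrest
      rw [hsplit] at this
      simpa using this
    have hdj₀ : d j₀ = ε j₀ := if_neg hne
    have hhp : p j₀ ∣ h j₀ * phat j₀ := by
      rcases hε j₀ with h1 | h1
      · rw [hdj₀, h1, one_mul] at hterm; exact hterm
      · rw [hdj₀, h1] at hterm
        have : (-1 : ℤ) * h j₀ * phat j₀ = -(h j₀ * phat j₀) := by ring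
        rw [this, dvd_neg] at hterm; exact hterm
    exact hpj₀ ((hcop_phat j₀).dvd_of_dvd_mul_right hhp)
  -- the "Good" predicate
  set Good : ℤ → ℤ → Prop := fun n s => ∃ ε : Fin r → ℤ,
    (∀ j, ε j = 1 ∨ ε j = -1) ∧ ε j₀ = s ∧ 2 * P ∣ n - S ε with hGood
  have hex : ∀ n : ℤ, Good n 1 → Good n (-1) → False := by
    rintro n ⟨ε, hε, he1, hd1⟩ ⟨ε', hε', he2, hd2⟩
    have hdd : 2 * P ∣ S ε' - S ε := by
      have := dvd_sub hd1 hd2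
      have heq : n - S ε - (n - S ε') = S ε' - S ε := by ring
      rwa [heq] at this
    have := key ε' ε hε' hε hdd
    rw [he1, he2] at this
    norm_num at this
  -- flipping the sign at j₀
  have hflip : ∀ (ε : Fin r → ℤ), (∀ j, ε j = 1 ∨ ε j = -1) →
      (∀ j, Function.update ε j₀ (-(ε j₀)) j = 1 ∨ Function.update ε j₀ (-(ε j₀)) j = -1) ∧
      S (Function.update ε j₀ (-(ε j₀))) = S ε - 2 * ε j₀ * (h j₀ * phat j₀) ∧
      (∏ j ∈ J, Function.update ε j₀ (-(ε j₀)) j) = -∏ j ∈ J, ε j := by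
    intro ε hε
    refine ⟨?_, ?_, ?_⟩
    · intro j
      by_cases hj : j = j₀
      · subst hj; rw [Function.update_self]
        rcases hε j with h1 | h1 <;> simp [h1]
      · rw [Function.update_of_ne hj]; exact hε j
    · simp only [hS]
      have h1 : ∀ f : Fin r → ℤ, ∑ j, f j * h j * phat j
          = f j₀ * h j₀ * phat j₀ + ∑ j ∈ Finset.univ.erase j₀, f j * h j * phat j :=
        fun f => (Finset.add_sum_erase _ _ (Finset.mem_univ j₀)).symm
      rw [h1, h1 ε, Function.update_self]
      have h2 : ∑ j ∈ Finset.univ.erase j₀, Function.update ε j₀ (-(ε j₀)) j * h j * phat j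
          = ∑ j ∈ Finset.univ.erase j₀, ε j * h j * phat j :=
        Finset.sum_congr rfl fun j hj => by
          rw [Function.update_of_ne (Finset.ne_of_mem_erase hj)]
      rw [h2]; ring
    · rw [Finset.prod_update_of_mem hj₀J, ← Finset.mul_prod_erase _ _ hj₀J,
        Finset.erase_eq]
      ring
  -- reduction mod 2P into Icc 1 (2P)
  set red : ℤ → ℤ := fun m => (m - 1) % (2 * P) + 1 with hredd
  have hred_mem : ∀ m : ℤ, red m ∈ Finset.Icc 1 (2 * P) := by
    intro m
    have h1 := Int.emod_nonneg (m - 1) (ne_of_gt hTpos)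
    have h2 := Int.emod_lt_of_pos (m - 1) hTpos
    simp only [hredd, Finset.mem_Icc]
    omega
  have hred_dvd : ∀ m : ℤ, 2 * P ∣ m - red m := by
    intro m
    refine ⟨(m - 1) / (2 * P), ?_⟩
    simp only [hredd]
    rw [Int.emod_def]
    ring
  have hInj : ∀ a ∈ Finset.Icc (1 : ℤ) (2 * P), ∀ b ∈ Finset.Icc (1 : ℤ) (2 * P),
      2 * P ∣ a - b → a = b := by
    intro a ha b hb hdvd
    rw [Finset.mem_Icc] at ha hb
    obtain ⟨k, hk⟩ := hdvd
    rcases lt_trichotomy k 0 with hk0 | hk0 | hk0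
    · nlinarith
    · rw [hk0] at hk; linarith
    · nlinarith
  -- D is not a period
  set D : ℤ := 2 * (h j₀ * phat j₀) with hD
  have hD_not : ¬ 2 * P ∣ D := by
    intro ⟨k, hk⟩
    have : h j₀ * phat j₀ = P * k := by simp only [hD] at hk; linarith
    have hdv : p j₀ ∣ h j₀ * phat j₀ := this ▸ Dvd.dvd.mul_right hpj₀P k
    exact hpj₀ ((hcop_phat j₀).dvd_of_dvd_mul_right hdv)
  -- the two moves
  have hG1 : ∀ n : ℤ, Good n (-1) → Good (red (n + D)) 1 ∧ g (red (n + D)) = -g n := by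
    rintro n ⟨ε, hε, hej, hdvd⟩
    obtain ⟨hε', hSval, hprod⟩ := hflip ε hε
    set ε' : Fin r → ℤ := Function.update ε j₀ (-(ε j₀)) with hε'd
    have he'j : ε' j₀ = 1 := by
      simp only [hε'd, Function.update_self, hej]; norm_num
    have hSe' : S ε' = S ε + D := by rw [hSval, hej, hD]; ring
    have hdvd' : 2 * P ∣ red (n + D) - S ε' := by
      have h1 := hred_dvd (n + D)
      have heq : red (n + D) - S ε' = (n - S ε) - ((n + D) - red (n + D)) := by
        rw [hSe']; ring
      rw [heq]; exact dvd_sub hdvd h1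
    refine ⟨⟨ε', hε', he'j, hdvd'⟩, ?_⟩
    rw [hgval _ ε' hε' hdvd', hgval n ε hε hdvd, hprod]
  have hG2 : ∀ n : ℤ, Good n 1 → Good (red (n - D)) (-1) ∧ g (red (n - D)) = -g n := by
    rintro n ⟨ε, hε, hej, hdvd⟩
    obtain ⟨hε', hSval, hprod⟩ := hflip ε hε
    set ε' : Fin r → ℤ := Function.update ε j₀ (-(ε j₀)) with hε'd
    have he'j : ε' j₀ = -1 := by
      simp only [hε'd, Function.update_self, hej]
    have hSe' : S ε' = S ε - D := by rw [hSval, hej, hD]; ring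
    have hdvd' : 2 * P ∣ red (n - D) - S ε' := by
      have h1 := hred_dvd (n - D)
      have heq : red (n - D) - S ε' = (n - S ε) - ((n - D) - red (n - D)) := by
        rw [hSe']; ring
      rw [heq]; exact dvd_sub hdvd h1
    refine ⟨⟨ε', hε', he'j, hdvd'⟩, ?_⟩
    rw [hgval _ ε' hε' hdvd', hgval n ε hε hdvd, hprod]
  have hzero : ∀ n : ℤ, ¬ Good n (-1) → ¬ Good n 1 → g n = 0 := by
    intro n h1 h2
    apply hgzero
    rintro ⟨ε, hε, hdvd⟩
    rcases hε j₀ with he | he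
    · exact h2 ⟨ε, hε, he, hdvd⟩
    · exact h1 ⟨ε, hε, he, hdvd⟩
  -- the involution
  set i : ℤ → ℤ := fun n =>
    if Good n (-1) then red (n + D) else if Good n 1 then red (n - D) else n with hi
  have hi_neg : ∀ n, Good n (-1) → i n = red (n + D) := by
    intro n hn; simp only [hi, if_pos hn]
  have hi_pos : ∀ n, ¬ Good n (-1) → Good n 1 → i n = red (n - D) := by
    intro n hn hn'; simp only [hi, if_neg hn, if_pos hn']
  have hi_none : ∀ n, ¬ Good n (-1) → ¬ Good n 1 → i n = n := by
    intro n hn hn'; simp only [hi, if_neg hn, if_neg hn']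
  refine Finset.sum_involution (fun n _ => i n) ?_ ?_ ?_ ?_
  · -- g a + g (i a) = 0
    intro a _
    show g a + g (i a) = 0
    by_cases h1 : Good a (-1)
    · rw [hi_neg a h1, (hG1 a h1).2]; ring
    · by_cases h2 : Good a 1
      · rw [hi_pos a h1 h2, (hG2 a h2).2]; ring
      · rw [hi_none a h1 h2, hzero a h1 h2]; ring
  · -- g a ≠ 0 → i a ≠ a
    intro a _ hga
    show i a ≠ a
    intro hia
    by_cases h1 : Good a (-1)
    · rw [hi_neg a h1] at hia
      apply hD_not
      have h2 := hred_dvd (a + D)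
      rw [hia] at h2
      have : a + D - a = D := by ring
      rwa [this] at h2
    · by_cases h2 : Good a 1
      · rw [hi_pos a h1 h2] at hia
        apply hD_not
        have h3 := hred_dvd (a - D)
        rw [hia] at h3
        have heq : a - D - a = -D := by ring
        rw [heq, dvd_neg] at h3
        exact h3
      · exact hga (hzero a h1 h2)
  · -- i a ∈ s
    intro a ha
    show i a ∈ Finset.Icc 1 (2 * P)
    by_cases h1 : Good a (-1)
    · rw [hi_neg a h1]; exact hred_mem _
    · by_cases h2 : Good a 1
      · rw [hi_pos a h1 h2]; exact hred_mem _
      · rw [hi_none a h1 h2]; exact ha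
  · -- i (i a) = a
    intro a ha
    show i (i a) = a
    by_cases h1 : Good a (-1)
    · have hia := hi_neg a h1
      have hG := (hG1 a h1).1
      have hnot : ¬ Good (red (a + D)) (-1) := fun hc => hex _ hG hc
      rw [hia, hi_pos _ hnot hG]
      apply hInj _ (hred_mem _) _ ha
      have d1 := hred_dvd (red (a + D) - D)
      have d2 := hred_dvd (a + D)
      have heq : red (red (a + D) - D) - a
          = -((red (a + D) - D) - red (red (a + D) - D)) - ((a + D) - red (a + D)) := by
        ring
      rw [heq]
      exact dvd_sub (dvd_neg.mpr d1) d2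
    · by_cases h2 : Good a 1
      · have hia := hi_pos a h1 h2
        have hG := (hG2 a h2).1
        have hnot := hi_neg (red (a - D)) hG
        rw [hia, hnot]
        apply hInj _ (hred_mem _) _ ha
        have d1 := hred_dvd (red (a - D) + D)
        have d2 := hred_dvd (a - D)
        have heq : red (red (a - D) + D) - a
            = -((red (a - D) + D) - red (red (a - D) + D)) - ((a - D) - red (a - D)) := by
          ring
        rw [heq]
        exact dvd_sub (dvd_neg.mpr d1) d2
      · rw [hi_none a h1 h2, hi_none a h1 h2]
end
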